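/- arXiv:1707.02144 — 4 statements merged into one kernel-verified Lean document; each statement's English description precedes it below -/
import Mathlib

section
/- Suppose T ∈ ℚ⟦X⟧ is a formal power series with zero constant term satisfying T = X · exp(∑_{i≥1} T(X^i)/i), where T(X^i) denotes the substitution of X^i into T, the infinite sum converges coefficientwise (the i-th summand has order ≥ i), and exp denotes the formal power series exponential. Then its coefficients t(n) = coeff_{X^n} T satisfy t(1) = 1 and, for every n ≥ 2, (n−1)·t(n) = ∑_{i=1}^{n−1} t(n−i) · (∑_{m ∣ i} m·t(m)), the inner sum ranging over the positive divisors m of i. -/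
open PowerSeries Filter Topology

/-- Composition `f ∘ g` of formal power series (substitution of `g` into `f`), defined
coefficientwise; this is the genuine substitution when `g` has zero constant term
(then the `k`-th summand `(coeff k f) • g^k` has order `≥ k`, so the sum converges
coefficientwise). -/
noncomputable def psComp {R : Type*} [CommSemiring R] (f g : PowerSeries R) : PowerSeries R :=
  PowerSeries.mk fun n => ∑ k ∈ Finset.range (n + 1),
    PowerSeries.coeff k f * PowerSeries.coeff n (g ^ k)

lemma coeff_psComp (f g : PowerSeries ℚ) (n : ℕ) :
    PowerSeries.coeff n (psComp f g) =
      ∑ k ∈ Finset.range (n + 1),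
        PowerSeries.coeff k f * PowerSeries.coeff n (g ^ k) := by
  simp [psComp]

lemma coeff_pow_zero_of_lt {g : PowerSeries ℚ} (hg : PowerSeries.constantCoeff g = 0)
    {a j : ℕ} (h : a < j) : PowerSeries.coeff a (g ^ j) = 0 := by
  have : (PowerSeries.X : PowerSeries ℚ) ^ j ∣ g ^ j :=
    pow_dvd_pow_of_dvd (PowerSeries.X_dvd_iff.mpr hg) j
  exact PowerSeries.X_pow_dvd_iff.mp this a h

lemma exp_comp_deriv (S : PowerSeries ℚ) (hS : PowerSeries.constantCoeff S = 0) :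
    d⁄dX ℚ (psComp (PowerSeries.exp ℚ) S) = psComp (PowerSeries.exp ℚ) S * d⁄dX ℚ S := by
  ext n
  rw [PowerSeries.coeff_derivative, coeff_psComp, PowerSeries.coeff_mul]
  have hL : (∑ k ∈ Finset.range (n + 1 + 1),
        PowerSeries.coeff k (exp ℚ) * PowerSeries.coeff (n+1) (S ^ k)) * ((n:ℚ)+1)
      = ∑ j ∈ Finset.range (n + 1),
        PowerSeries.coeff j (exp ℚ) * PowerSeries.coeff n (S ^ j * d⁄dX ℚ S) := by
    rw [Finset.sum_mul, Finset.sum_range_succ']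
    have h0 : (PowerSeries.coeff 0 (exp ℚ) * PowerSeries.coeff (n+1) (S ^ 0)) * ((n:ℚ)+1)
        = 0 := by simp
    rw [h0, add_zero]
    refine Finset.sum_congr rfl fun j _ => ?_
    have hd : PowerSeries.coeff (n+1) (S ^ (j+1)) * ((n:ℚ)+1)
        = ((j:ℚ)+1) * PowerSeries.coeff n (S ^ j * d⁄dX ℚ S) := by
      have := PowerSeries.coeff_derivative (S ^ (j+1)) n
      rw [Derivation.leibniz_pow] at this
      simp only [Nat.add_sub_cancel, smul_eq_mul, map_nsmul, nsmul_eq_mul] at this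
      rw [← this, ← map_natCast (PowerSeries.C (R := ℚ)) (j+1), PowerSeries.coeff_C_mul]
      push_cast
      ring
    have he : PowerSeries.coeff (j+1) (exp ℚ) * ((j:ℚ)+1) = PowerSeries.coeff j (exp ℚ) := by
      rw [PowerSeries.coeff_exp, PowerSeries.coeff_exp]
      simp only [Algebra.algebraMap_self, RingHom.id_apply, Nat.factorial_succ]
      have h1 : ((j:ℚ)+1) ≠ 0 := by positivity
      have h2 : ((j.factorial : ℚ)) ≠ 0 := by exact_mod_cast j.factorial_ne_zero
      field_simp
      push_cast
      ring
    calc PowerSeries.coeff (j+1) (exp ℚ) * PowerSeries.coeff (n+1) (S ^ (j+1)) * ((n:ℚ)+1)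
        = (PowerSeries.coeff (j+1) (exp ℚ) * ((j:ℚ)+1)) *
            PowerSeries.coeff n (S ^ j * d⁄dX ℚ S) := by rw [mul_assoc, hd]; ring
      _ = _ := by rw [he]
  rw [hL]
  have hR : ∀ p ∈ Finset.HasAntidiagonal.antidiagonal n,
      PowerSeries.coeff p.1 (psComp (exp ℚ) S) * PowerSeries.coeff p.2 (d⁄dX ℚ S)
      = ∑ k ∈ Finset.range (n+1), PowerSeries.coeff k (exp ℚ) *
          (PowerSeries.coeff p.1 (S ^ k) * PowerSeries.coeff p.2 (d⁄dX ℚ S)) := by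
    intro p hp
    rw [coeff_psComp]
    have hsub : Finset.range (p.1 + 1) ⊆ Finset.range (n+1) := by
      apply Finset.range_subset_range.mpr
      have := Finset.HasAntidiagonal.mem_antidiagonal.mp hp
      omega
    rw [Finset.sum_subset hsub, Finset.sum_mul]
    · exact Finset.sum_congr rfl fun k _ => by ring
    · intro k hk hk2
      have : p.1 < k := by
        simp only [Finset.mem_range] at hk2
        omega
      rw [coeff_pow_zero_of_lt hS this, mul_zero]
  rw [Finset.sum_congr rfl hR, Finset.sum_comm]
  refine Finset.sum_congr rfl fun k _ => ?_
  rw [← Finset.mul_sum, PowerSeries.coeff_mul]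

lemma coeff_comp_Xpow (T : PowerSeries ℚ) (j i : ℕ) (hj : 1 ≤ j) :
    PowerSeries.coeff i (psComp T ((PowerSeries.X : PowerSeries ℚ) ^ j)) =
      if j ∣ i then PowerSeries.coeff (i / j) T else 0 := by
  rw [coeff_psComp]
  have hterm : ∀ k, PowerSeries.coeff i (((PowerSeries.X : PowerSeries ℚ) ^ j) ^ k)
      = if i = j * k then 1 else 0 := by
    intro k
    rw [← pow_mul, PowerSeries.coeff_X_pow]
  by_cases h : j ∣ i
  · rw [Finset.sum_eq_single (i / j)]
    · rw [hterm, if_pos (Nat.mul_div_cancel' h).symm, mul_one, if_pos h]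
    · intro k hk hne
      rw [hterm, if_neg, mul_zero]
      intro he
      apply hne
      rw [he, Nat.mul_div_cancel_left k (by omega : 0 < j)]
    · intro hmem
      exact absurd (Finset.mem_range.mpr (Nat.lt_succ_of_le (Nat.div_le_self i j))) hmem
  · rw [if_neg h]
    apply Finset.sum_eq_zero
    intro k _
    rw [hterm, if_neg, mul_zero]
    intro he
    exact h ⟨k, he⟩

lemma div_sum (T : PowerSeries ℚ) (i : ℕ) :
    (i:ℚ) * (∑ j ∈ Finset.Icc 1 i,
        PowerSeries.coeff i (psComp T ((PowerSeries.X : PowerSeries ℚ) ^ j)) / (j:ℚ))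
      = ∑ m ∈ Nat.divisors i, (m:ℚ) * PowerSeries.coeff m T := by
  have h1 : ∀ j ∈ Finset.Icc 1 i,
      PowerSeries.coeff i (psComp T ((PowerSeries.X : PowerSeries ℚ) ^ j)) / (j:ℚ)
        = if j ∣ i then PowerSeries.coeff (i / j) T / (j:ℚ) else 0 := by
    intro j hj
    rw [coeff_comp_Xpow T j i (Finset.mem_Icc.mp hj).1]
    split_ifs <;> simp
  rw [Finset.sum_congr rfl h1]
  have h2 : ∑ j ∈ Finset.Icc 1 i, (if j ∣ i then PowerSeries.coeff (i / j) T / (j:ℚ) else 0)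
      = ∑ j ∈ Nat.divisors i, PowerSeries.coeff (i / j) T / (j:ℚ) := by
    rw [Nat.divisors, ← Finset.Ico_add_one_right_eq_Icc, Finset.sum_filter]
  rw [h2, Finset.mul_sum]
  have h3 : ∀ j ∈ Nat.divisors i,
      (i:ℚ) * (PowerSeries.coeff (i / j) T / (j:ℚ))
        = ((i / j : ℕ) : ℚ) * PowerSeries.coeff (i / j) T := by
    intro j hj
    obtain ⟨hdvd, hne⟩ := Nat.mem_divisors.mp hj
    have hj0 : (j:ℚ) ≠ 0 := by
      have : j ≠ 0 := by rintro rfl; exact hne (Nat.zero_dvd.mp hdvd ▸ rfl)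
      exact_mod_cast this
    rw [Nat.cast_div hdvd hj0]
    field_simp
  rw [Finset.sum_congr rfl h3]
  exact Nat.sum_div_divisors i (fun m => (m:ℚ) * PowerSeries.coeff m T)

/-- If `T ∈ ℚ⟦X⟧` has zero constant term and satisfies
`T = X · exp(∑_{i≥1} T(X^i)/i)` (the sum taken coefficientwise: the `i`-th summand has
order `≥ i`, so `coeff n` only sees `1 ≤ i ≤ n`), then its coefficients `t n = coeff n T`
satisfy `t 1 = 1` and `(n−1)·t(n) = ∑_{i=1}^{n−1} t(n−i)·(∑_{m ∣ i} m·t(m))` for `n ≥ 2`. -/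
theorem polya_tree_coefficient_recurrence
    (T : PowerSeries ℚ)
    (hT0 : PowerSeries.constantCoeff T = 0)
    (hT : T = (PowerSeries.X : PowerSeries ℚ) *
        psComp (PowerSeries.exp ℚ)
          (PowerSeries.mk fun n => ∑ i ∈ Finset.Icc 1 n,
            PowerSeries.coeff n (psComp T ((PowerSeries.X : PowerSeries ℚ) ^ i)) / (i : ℚ))) :
    PowerSeries.coeff 1 T = 1 ∧
      ∀ n : ℕ, 2 ≤ n →
        ((n : ℚ) - 1) * PowerSeries.coeff n T =
          ∑ i ∈ Finset.Icc 1 (n - 1),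
            PowerSeries.coeff (n - i) T *
              ∑ m ∈ Nat.divisors i, (m : ℚ) * PowerSeries.coeff m T := by
  set S : PowerSeries ℚ := PowerSeries.mk fun n => ∑ i ∈ Finset.Icc 1 n,
      PowerSeries.coeff n (psComp T ((PowerSeries.X : PowerSeries ℚ) ^ i)) / (i : ℚ) with hSdef
  set E : PowerSeries ℚ := psComp (PowerSeries.exp ℚ) S with hEdef
  have hS0 : PowerSeries.constantCoeff S = 0 := by
    rw [hSdef, ← PowerSeries.coeff_zero_eq_constantCoeff_apply, PowerSeries.coeff_mk]
    simp
  have coeffS : ∀ i, PowerSeries.coeff i S = ∑ j ∈ Finset.Icc 1 i,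
      PowerSeries.coeff i (psComp T ((PowerSeries.X : PowerSeries ℚ) ^ j)) / (j : ℚ) := by
    intro i
    rw [hSdef, PowerSeries.coeff_mk]
  constructor
  · conv_lhs => rw [hT]
    rw [show (1:ℕ) = 0 + 1 from rfl, PowerSeries.coeff_succ_X_mul, coeff_psComp]
    simp [PowerSeries.coeff_exp]
  · intro n hn
    obtain ⟨m, rfl⟩ : ∃ m, n = m + 2 := ⟨n - 2, by omega⟩
    have hdT : d⁄dX ℚ T = E + T * d⁄dX ℚ S := by
      conv_lhs => rw [hT]
      rw [Derivation.leibniz, PowerSeries.derivative_X, exp_comp_deriv S hS0,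
        smul_eq_mul, smul_eq_mul, mul_one, hT]
      ring
    have hc := congrArg (PowerSeries.coeff (m+1)) hdT
    rw [PowerSeries.coeff_derivative, map_add] at hc
    have hE : PowerSeries.coeff (m+1) E = PowerSeries.coeff (m+2) T := by
      conv_rhs => rw [hT]
      rw [show m+2 = (m+1)+1 from rfl, PowerSeries.coeff_succ_X_mul]
    have hmul : PowerSeries.coeff (m+1) (T * d⁄dX ℚ S)
        = ∑ i ∈ Finset.Icc 1 (m+1),
            PowerSeries.coeff (m+2-i) T * ((i:ℚ) * PowerSeries.coeff i S) := by
      rw [PowerSeries.coeff_mul, Finset.Nat.sum_antidiagonal_eq_sum_range_succ_mk]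
      have hsub : Finset.Icc 1 (m+1) ⊆ Finset.range (m+1+1) := by
        intro k hk
        simp only [Finset.mem_Icc] at hk
        simp only [Finset.mem_range]
        omega
      have hzero : ∀ k ∈ Finset.range (m+1+1), k ∉ Finset.Icc 1 (m+1) →
          PowerSeries.coeff k T * PowerSeries.coeff (m+1-k) (d⁄dX ℚ S) = 0 := by
        intro k hk hk2
        simp only [Finset.mem_range] at hk
        simp only [Finset.mem_Icc] at hk2
        have : k = 0 := by omega
        subst this
        rw [PowerSeries.coeff_zero_eq_constantCoeff_apply, hT0, zero_mul]
      rw [← Finset.sum_subset hsub hzero]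
      refine Finset.sum_nbij' (fun k => m+2-k) (fun i => m+2-i) ?_ ?_ ?_ ?_ ?_
      · intro k hk
        simp only [Finset.mem_Icc] at hk ⊢
        omega
      · intro i hi
        simp only [Finset.mem_Icc] at hi ⊢
        omega
      · intro k hk
        simp only [Finset.mem_Icc] at hk
        show m+2-(m+2-k) = k
        omega
      · intro i hi
        simp only [Finset.mem_Icc] at hi
        show m+2-(m+2-i) = i
        omega
      · intro k hk
        simp only [Finset.mem_Icc] at hk
        have h1 : (m+1-k)+1 = m+2-k := by omega
        have h2 : m+2-(m+2-k) = k := by omega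
        rw [PowerSeries.coeff_derivative, h1, h2]
        have h3 : ((m+1-k : ℕ):ℚ)+1 = ((m+2-k : ℕ):ℚ) := by
          rw [Nat.cast_sub (by omega), Nat.cast_sub (by omega)]
          push_cast
          ring
        rw [h3]
        ring
    have key : ((m+2:ℚ)-1) * PowerSeries.coeff (m+2) T
        = ∑ i ∈ Finset.Icc 1 (m+1),
            PowerSeries.coeff (m+2-i) T * ((i:ℚ) * PowerSeries.coeff i S) := by
      rw [← hmul]
      rw [hE] at hc
      push_cast at hc ⊢
      linarith
    have hfin : ∀ i ∈ Finset.Icc 1 (m+1),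
        PowerSeries.coeff (m+2-i) T * ((i:ℚ) * PowerSeries.coeff i S)
          = PowerSeries.coeff (m+2-i) T *
              ∑ mm ∈ Nat.divisors i, (mm:ℚ) * PowerSeries.coeff mm T := by
      intro i hi
      rw [coeffS i, div_sum T i]
    rw [Finset.sum_congr rfl hfin] at key
    have hn1 : m+2-1 = m+1 := rfl
    rw [hn1]
    convert key using 2
    push_cast
    ring
end

section
/- In ℚ⟦X⟧, with T = ∑_{n≥1} t(n)·X^n and D = ∑_{n≥0} d(n)·X^n, one has ∑_{k≥1} (k^k/k!)·(X·D)^k = T·(1−T)⁻¹ (the series 1−T is a unit since T has zero constant term, and the left-hand infinite sum converges coefficientwise since the k-th summand has order ≥ k). Equivalently, for every n, coeff_{X^n}( (1−T)·∑_{k=1}^{n} (k^k/k!)·(X·D)^k ) = t(n). -/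
open PowerSeries Filter Topology Finset


noncomputable def theta (f : PowerSeries ℚ) : PowerSeries ℚ :=
  PowerSeries.mk fun n => (n : ℚ) * PowerSeries.coeff n f

@[simp] lemma coeff_theta (n : ℕ) (f : PowerSeries ℚ) :
    PowerSeries.coeff n (theta f) = (n : ℚ) * PowerSeries.coeff n f := by
  simp [theta]

lemma theta_mul (f g : PowerSeries ℚ) :
    theta (f * g) = theta f * g + f * theta g := by
  ext n
  rw [coeff_theta, map_add, coeff_mul, coeff_mul, coeff_mul, Finset.mul_sum,
    ← Finset.sum_add_distrib]
  refine Finset.sum_congr rfl fun p hp => ?_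
  rw [Finset.HasAntidiagonal.mem_antidiagonal] at hp
  simp only [coeff_theta]
  rw [← hp]
  push_cast
  ring

lemma theta_X_mul (f : PowerSeries ℚ) :
    theta (PowerSeries.X * f) = PowerSeries.X * f + PowerSeries.X * theta f := by
  ext n
  match n with
  | 0 => simp [coeff_theta, PowerSeries.coeff_zero_X_mul]
  | (n+1) =>
    rw [coeff_theta, map_add, PowerSeries.coeff_succ_X_mul, PowerSeries.coeff_succ_X_mul,
      coeff_theta]
    push_cast
    ring

lemma theta_pow (f : PowerSeries ℚ) (m : ℕ) :
    theta (f ^ (m + 1)) = ((m + 1 : ℕ) : PowerSeries ℚ) * (f ^ m * theta f) := by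
  induction m with
  | zero => simp
  | succ m ih =>
      rw [pow_succ, theta_mul, ih]
      push_cast
      ring

/-- uniqueness of solutions of θ f = f * A with A₀ = 0. -/
lemma ode_unique_zero (A f g : PowerSeries ℚ)
    (hA : PowerSeries.coeff 0 A = 0)
    (hf : theta f = f * A) (hg : theta g = g * A)
    (h0 : PowerSeries.coeff 0 f = PowerSeries.coeff 0 g) : f = g := by
  ext n
  induction n using Nat.strong_induction_on with
  | _ n ih =>
    match n with
    | 0 => exact h0
    | (n+1) =>
      have hfn := congrArg (PowerSeries.coeff (n+1)) hf
      have hgn := congrArg (PowerSeries.coeff (n+1)) hg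
      rw [coeff_theta, coeff_mul] at hfn hgn
      have key : ∑ p ∈ antidiagonal (n+1), PowerSeries.coeff p.1 f * PowerSeries.coeff p.2 A
          = ∑ p ∈ antidiagonal (n+1), PowerSeries.coeff p.1 g * PowerSeries.coeff p.2 A := by
        refine Finset.sum_congr rfl fun p hp => ?_
        rw [Finset.HasAntidiagonal.mem_antidiagonal] at hp
        rcases Nat.eq_zero_or_pos p.2 with h2 | h2
        · rw [h2, hA, mul_zero, mul_zero]
        · have : p.1 < n + 1 := by omega
          rw [ih p.1 this]
      have : ((n:ℚ)+1) * PowerSeries.coeff (n+1) f = ((n:ℚ)+1) * PowerSeries.coeff (n+1) g := by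
        push_cast at hfn hgn
        rw [hfn, hgn, key]
      have hne : ((n:ℚ)+1) ≠ 0 := by positivity
      exact mul_left_cancel₀ hne this

/-- uniqueness of solutions of θ f = f * A with A₀ = 1, matching first two coefficients. -/
lemma ode_unique_one (A f g : PowerSeries ℚ)
    (hA : PowerSeries.coeff 0 A = 1)
    (hf : theta f = f * A) (hg : theta g = g * A)
    (h0 : PowerSeries.coeff 0 f = PowerSeries.coeff 0 g)
    (h1 : PowerSeries.coeff 1 f = PowerSeries.coeff 1 g) : f = g := by
  ext n
  induction n using Nat.strong_induction_on with
  | _ n ih =>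
    match n with
    | 0 => exact h0
    | 1 => exact h1
    | (n+2) =>
      have hfn := congrArg (PowerSeries.coeff (n+2)) hf
      have hgn := congrArg (PowerSeries.coeff (n+2)) hg
      rw [coeff_theta, coeff_mul] at hfn hgn
      rw [← Finset.sum_erase_add _ _ (Finset.HasAntidiagonal.mem_antidiagonal.mpr (by simp : (n+2,0).1 + (n+2,0).2 = n+2))] at hfn hgn
      have key : ∑ p ∈ (antidiagonal (n+2)).erase (n+2,0),
            PowerSeries.coeff p.1 f * PowerSeries.coeff p.2 A
          = ∑ p ∈ (antidiagonal (n+2)).erase (n+2,0),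
            PowerSeries.coeff p.1 g * PowerSeries.coeff p.2 A := by
        refine Finset.sum_congr rfl fun p hp => ?_
        have hp2 := Finset.mem_of_mem_erase hp
        rw [Finset.HasAntidiagonal.mem_antidiagonal] at hp2
        have hne := Finset.ne_of_mem_erase hp
        have : p.1 < n + 2 := by
          rcases Nat.lt_or_ge p.1 (n+2) with h | h
          · exact h
          · exfalso; apply hne
            have : p.1 = n + 2 := by omega
            have : p.2 = 0 := by omega
            exact Prod.ext (by omega) this
        rw [ih p.1 this]
      rw [hA, key] at hfn
      -- hfn : (n+2) * f_{n+2} = Σ' + f_{n+2} * 1 ; same for g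
      have hfg : ((n:ℚ)+2) * PowerSeries.coeff (n+2) f - PowerSeries.coeff (n+2) f
          = ((n:ℚ)+2) * PowerSeries.coeff (n+2) g - PowerSeries.coeff (n+2) g := by
        push_cast at hfn hgn
        rw [hA] at hgn
        rw [hfn, hgn]; ring
      have : ((n:ℚ)+1) * PowerSeries.coeff (n+2) f = ((n:ℚ)+1) * PowerSeries.coeff (n+2) g := by
        nlinarith [hfg]
      have hne : ((n:ℚ)+1) ≠ 0 := by positivity
      exact mul_left_cancel₀ hne this

/-- coefficients of powers of a series with zero constant term vanish below the exponent -/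
lemma coeff_pow_eq_zero_of_lt {f : PowerSeries ℚ} (h : PowerSeries.coeff 0 f = 0)
    {a j : ℕ} (haj : a < j) : PowerSeries.coeff a (f ^ j) = 0 := by
  have hX : (X : PowerSeries ℚ) ∣ f := X_dvd_iff.mpr (by simpa [PowerSeries.coeff_zero_eq_constantCoeff] using h)
  obtain ⟨g, hg⟩ := hX
  have : f ^ j = X ^ j * g ^ j := by rw [hg, mul_pow]
  rw [this]
  rcases Nat.lt_or_ge a j with _ | h2
  · rw [PowerSeries.coeff_mul]
    apply Finset.sum_eq_zero
    intro p hp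
    rw [Finset.HasAntidiagonal.mem_antidiagonal] at hp
    have : p.1 < j := by omega
    rw [PowerSeries.coeff_X_pow, if_neg (by omega), zero_mul]
  · omega


noncomputable def Sser (t : ℕ → ℚ) : PowerSeries ℚ :=
  PowerSeries.mk fun i => ∑ m ∈ Nat.divisors i, (m : ℚ) * t m

noncomputable def Sser' (t : ℕ → ℚ) : PowerSeries ℚ :=
  PowerSeries.mk fun i => (∑ m ∈ Nat.divisors i, (m : ℚ) * t m) - (i : ℚ) * t i


section
variable (t d : ℕ → ℚ)
    (ht0 : t 0 = 0) (ht1 : t 1 = 1)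
    (htrec : ∀ n : ℕ, 2 ≤ n →
      ((n : ℚ) - 1) * t n =
        ∑ i ∈ Finset.Icc 1 (n - 1), t (n - i) * ∑ m ∈ Nat.divisors i, (m : ℚ) * t m)
    (hd0 : d 0 = 1) (hd1 : d 1 = 0)
    (hdrec : ∀ n : ℕ, 2 ≤ n →
      (n : ℚ) * d n =
        ∑ i ∈ Finset.Icc 2 n, d (n - i) * ∑ m ∈ (Nat.divisors i).erase i, (m : ℚ) * t m)

include ht0 ht1 htrec in
lemma theta_T : theta (PowerSeries.mk t) = PowerSeries.mk t * (1 + Sser t) := by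
  ext n
  rw [coeff_theta, mul_add, map_add, mul_one, coeff_mul]
  rw [Finset.Nat.sum_antidiagonal_eq_sum_range_succ
    (fun a b => PowerSeries.coeff a (PowerSeries.mk t) * PowerSeries.coeff b (Sser t))]
  simp only [PowerSeries.coeff_mk, Sser]
  match n with
  | 0 => simp [ht0]
  | 1 => simp [Finset.sum_range_succ, Nat.divisors_one, Nat.divisors_zero, ht0, ht1]
  | (n+2) =>
    have h2 : 2 ≤ n + 2 := by omega
    have hrec := htrec (n+2) h2
    -- RHS sum over range (n+3) equals sum over Icc 1 (n+1)
    have hsub : Finset.Icc 1 (n+1) ⊆ Finset.range (n+3) := by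
      intro x hx; simp only [Finset.mem_Icc] at hx; simp only [Finset.mem_range]; omega
    have hext : ∑ k ∈ Finset.range (n+3), t k * ∑ m ∈ Nat.divisors (n+2-k), (m:ℚ) * t m
        = ∑ k ∈ Finset.Icc 1 (n+1), t k * ∑ m ∈ Nat.divisors (n+2-k), (m:ℚ) * t m := by
      rw [Finset.sum_subset hsub]
      intro x hx hx2
      simp only [Finset.mem_range] at hx
      simp only [Finset.mem_Icc, not_and, not_le] at hx2
      rcases Nat.eq_zero_or_pos x with h0 | h0
      · rw [h0, ht0]; ring
      · have : x = n + 2 := by omega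
        rw [this]; simp
    have hrefl : ∑ k ∈ Finset.Icc 1 (n+1), t k * ∑ m ∈ Nat.divisors (n+2-k), (m:ℚ) * t m
        = ∑ i ∈ Finset.Icc 1 (n+1), t (n+2-i) * ∑ m ∈ Nat.divisors i, (m:ℚ) * t m := by
      refine Finset.sum_nbij' (fun k => n + 2 - k) (fun i => n + 2 - i) ?_ ?_ ?_ ?_ ?_
      · intro a ha; simp only [Finset.mem_Icc] at *; omega
      · intro a ha; simp only [Finset.mem_Icc] at *; omega
      · intro a ha; simp only [Finset.mem_Icc] at ha; omega
      · intro a ha; simp only [Finset.mem_Icc] at ha; omega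
      · intro a ha; simp only [Finset.mem_Icc] at ha
        have : n + 2 - (n + 2 - a) = a := by omega
        rw [this]
    rw [hext, hrefl]
    have : (n + 1 : ℕ) = n + 2 - 1 := by omega
    rw [this, ← hrec]
    push_cast
    ring

include ht1 hd1 hdrec in
lemma theta_D : theta (PowerSeries.mk d) = PowerSeries.mk d * Sser' t := by
  ext n
  rw [coeff_theta, coeff_mul]
  rw [Finset.Nat.sum_antidiagonal_eq_sum_range_succ
    (fun a b => PowerSeries.coeff a (PowerSeries.mk d) * PowerSeries.coeff b (Sser' t))]
  simp only [PowerSeries.coeff_mk, Sser']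
  -- s' i = ∑_{m ∈ divisors i \ {i}} m t m  for all i
  have hs' : ∀ i : ℕ, ((∑ m ∈ Nat.divisors i, (m:ℚ) * t m) - (i:ℚ) * t i)
      = ∑ m ∈ (Nat.divisors i).erase i, (m:ℚ) * t m := by
    intro i
    rcases Nat.eq_zero_or_pos i with h0 | h0
    · subst h0; simp
    · rw [← Finset.sum_erase_add _ _ (Nat.mem_divisors_self i (by omega))]
      ring
  match n with
  | 0 => simp
  | 1 => simp [Finset.sum_range_succ, Nat.divisors_one, Nat.divisors_zero, hd1, ht1]
  | (n+2) =>
    have hrec := hdrec (n+2) (by omega)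
    simp only [hs'] at hrec ⊢
    have hsub : Finset.Icc 2 (n+2) ⊆ Finset.range (n+3) := by
      intro x hx; simp only [Finset.mem_Icc] at hx; simp only [Finset.mem_range]; omega
    have hext : ∑ k ∈ Finset.range (n+3), d k * ∑ m ∈ (Nat.divisors (n+2-k)).erase (n+2-k), (m:ℚ) * t m
        = ∑ k ∈ Finset.Icc 0 n, d k * ∑ m ∈ (Nat.divisors (n+2-k)).erase (n+2-k), (m:ℚ) * t m := by
      have hsub2 : Finset.Icc 0 n ⊆ Finset.range (n+3) := by
        intro x hx; rw [Finset.mem_Icc] at hx; rw [Finset.mem_range]; omega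
      rw [Finset.sum_subset hsub2]
      intro x hx hx2
      simp only [Finset.mem_range] at hx
      simp only [Finset.mem_Icc, not_and, not_le] at hx2
      have : x = n + 1 ∨ x = n + 2 := by omega
      rcases this with h | h <;> subst h
      · have h1 : n + 2 - (n+1) = 1 := by omega
        rw [h1, Nat.divisors_one]; simp
      · simp
    have hrefl : ∑ k ∈ Finset.Icc 0 n, d k * ∑ m ∈ (Nat.divisors (n+2-k)).erase (n+2-k), (m:ℚ) * t m
        = ∑ i ∈ Finset.Icc 2 (n+2), d (n+2-i) * ∑ m ∈ (Nat.divisors i).erase i, (m:ℚ) * t m := by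
      refine Finset.sum_nbij' (fun k => n + 2 - k) (fun i => n + 2 - i) ?_ ?_ ?_ ?_ ?_
      · intro a ha; simp only [Finset.mem_Icc] at *; omega
      · intro a ha; simp only [Finset.mem_Icc] at *; omega
      · intro a ha; simp only [Finset.mem_Icc] at ha; omega
      · intro a ha; simp only [Finset.mem_Icc] at ha; omega
      · intro a ha; simp only [Finset.mem_Icc] at ha
        have h1 : n + 2 - (n + 2 - a) = a := by omega
        rw [h1]
    rw [hext, hrefl, ← hrec]
end



noncomputable def Etil (t : ℕ → ℚ) (c : ℚ) : PowerSeries ℚ :=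
  PowerSeries.mk fun n => ∑ m ∈ Finset.range (n+1),
    c ^ m / (m.factorial : ℚ) * PowerSeries.coeff n ((PowerSeries.mk t) ^ m)

lemma coeff_natCast_mul (k : ℕ) (f : PowerSeries ℚ) (n : ℕ) :
    PowerSeries.coeff n ((k : PowerSeries ℚ) * f) = (k : ℚ) * PowerSeries.coeff n f := by
  rw [← map_natCast (PowerSeries.C (R := ℚ)) k, PowerSeries.coeff_C_mul]

section
variable {t : ℕ → ℚ} (ht0 : t 0 = 0)

include ht0 in
lemma hT0' : PowerSeries.coeff 0 (PowerSeries.mk t) = 0 := by simp [ht0]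

@[simp] lemma coeff_Etil_zero (c : ℚ) : PowerSeries.coeff 0 (Etil t c) = 1 := by
  simp [Etil]

lemma Etil_zero : Etil t 0 = 1 := by
  ext n
  rw [Etil, PowerSeries.coeff_mk]
  rw [Finset.sum_eq_single 0 (fun m _ hm0 => by rw [zero_pow hm0, zero_div, zero_mul])
    (fun h => absurd (Finset.self_mem_range_succ 0) (by simp at h ⊢))]
  simp [PowerSeries.coeff_one]

include ht0 in
lemma coeff_Tpow_mul_Etil (c : ℚ) (k b : ℕ) :
    PowerSeries.coeff b ((PowerSeries.mk t) ^ k * Etil t c)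
      = ∑ m ∈ Finset.range (b+1),
          c ^ m / (m.factorial : ℚ) * PowerSeries.coeff b ((PowerSeries.mk t) ^ (k + m)) := by
  rw [PowerSeries.coeff_mul]
  have h1 : ∀ p ∈ antidiagonal b,
      PowerSeries.coeff p.1 ((PowerSeries.mk t)^k) * PowerSeries.coeff p.2 (Etil t c)
      = ∑ m ∈ Finset.range (b+1), c ^ m / (m.factorial : ℚ) *
          (PowerSeries.coeff p.1 ((PowerSeries.mk t)^k) *
            PowerSeries.coeff p.2 ((PowerSeries.mk t)^m)) := by
    intro p hp
    rw [Finset.HasAntidiagonal.mem_antidiagonal] at hp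
    rw [Etil, PowerSeries.coeff_mk]
    have hsub : Finset.range (p.2 + 1) ⊆ Finset.range (b+1) := by
      intro x hx; rw [Finset.mem_range] at *; omega
    rw [Finset.mul_sum]
    rw [← Finset.sum_subset hsub (fun x hx hx2 => ?_)]
    · refine Finset.sum_congr rfl fun m hm => by ring
    · rw [Finset.mem_range] at hx hx2
      rw [coeff_pow_eq_zero_of_lt (hT0' ht0) (show p.2 < x by omega)]
      ring
  rw [Finset.sum_congr rfl h1, Finset.sum_comm]
  refine Finset.sum_congr rfl fun m _ => ?_
  rw [← Finset.mul_sum, pow_add, PowerSeries.coeff_mul]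

include ht0 in
lemma theta_Etil (c : ℚ) :
    theta (Etil t c) = Etil t c * (PowerSeries.C c * theta (PowerSeries.mk t)) := by
  set T := PowerSeries.mk t with hT
  have hθT0 : PowerSeries.coeff 0 (theta T) = 0 := by
    rw [coeff_theta]; simp
  ext n
  rw [coeff_theta]
  -- LHS
  have hL : (n : ℚ) * PowerSeries.coeff n (Etil t c)
      = c * ∑ m ∈ Finset.range n, c ^ m / (m.factorial : ℚ) *
          PowerSeries.coeff n (T ^ m * theta T) := by
    rw [Etil, PowerSeries.coeff_mk, Finset.mul_sum]
    have : ∀ m ∈ Finset.range (n+1), (n:ℚ) * (c ^ m / (m.factorial : ℚ) * PowerSeries.coeff n (T ^ m))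
        = c ^ m / (m.factorial : ℚ) * PowerSeries.coeff n (theta (T ^ m)) := by
      intro m _
      rw [coeff_theta]; ring
    rw [Finset.sum_congr rfl this, Finset.sum_range_succ' (fun m => c ^ m / (m.factorial : ℚ) * PowerSeries.coeff n (theta (T ^ m)))]
    have h0 : c ^ 0 / ((Nat.factorial 0 : ℕ) : ℚ) * PowerSeries.coeff n (theta (T ^ 0)) = 0 := by
      rw [coeff_theta]
      rcases Nat.eq_zero_or_pos n with h | h
      · subst h; simp
      · rw [pow_zero T, PowerSeries.coeff_one, if_neg (by omega)]; ring
    rw [h0, add_zero, Finset.mul_sum]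
    refine Finset.sum_congr rfl fun m _ => ?_
    rw [theta_pow, coeff_natCast_mul]
    have hfac : ((m+1).factorial : ℚ) = ((m+1 : ℕ) : ℚ) * (m.factorial : ℚ) := by
      rw [Nat.factorial_succ]; push_cast; ring
    rw [hfac]
    have hm1 : ((m+1 : ℕ) : ℚ) ≠ 0 := by positivity
    field_simp
    ring
  rw [hL]
  -- RHS
  rw [PowerSeries.coeff_mul]
  have h1 : ∀ p ∈ antidiagonal n,
      PowerSeries.coeff p.1 (Etil t c) * PowerSeries.coeff p.2 (PowerSeries.C c * theta T)
      = ∑ m ∈ Finset.range (n+1), c ^ m / (m.factorial : ℚ) *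
          (c * (PowerSeries.coeff p.1 (T^m) * PowerSeries.coeff p.2 (theta T))) := by
    intro p hp
    rw [Finset.HasAntidiagonal.mem_antidiagonal] at hp
    rw [Etil, PowerSeries.coeff_mk, PowerSeries.coeff_C_mul]
    have hsub : Finset.range (p.1 + 1) ⊆ Finset.range (n+1) := by
      intro x hx; rw [Finset.mem_range] at *; omega
    rw [Finset.sum_mul]
    rw [← Finset.sum_subset hsub (fun x hx hx2 => ?_)]
    · refine Finset.sum_congr rfl fun m hm => by ring
    · rw [Finset.mem_range] at hx hx2
      rw [coeff_pow_eq_zero_of_lt (hT0' ht0) (show p.1 < x by omega)]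
      ring
  rw [Finset.sum_congr rfl h1, Finset.sum_comm]
  have h2 : ∀ m ∈ Finset.range (n+1),
      ∑ p ∈ antidiagonal n, c ^ m / (m.factorial : ℚ) *
          (c * (PowerSeries.coeff p.1 (T^m) * PowerSeries.coeff p.2 (theta T)))
      = c * (c ^ m / (m.factorial : ℚ) * PowerSeries.coeff n (T ^ m * theta T)) := by
    intro m _
    rw [PowerSeries.coeff_mul, Finset.mul_sum, Finset.mul_sum]
    refine Finset.sum_congr rfl fun p _ => ?_
    ring
  rw [Finset.sum_congr rfl h2, ← Finset.mul_sum, Finset.sum_range_succ]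
  have h3 : PowerSeries.coeff n (T ^ n * theta T) = 0 := by
    rw [PowerSeries.coeff_mul]
    apply Finset.sum_eq_zero
    intro p hp
    rw [Finset.HasAntidiagonal.mem_antidiagonal] at hp
    rcases Nat.lt_or_ge p.1 n with h | h
    · rw [coeff_pow_eq_zero_of_lt (hT0' ht0) h, zero_mul]
    · have : p.2 = 0 := by omega
      rw [this, hθT0, mul_zero]
  rw [h3, mul_zero, add_zero]
end


noncomputable def betaQ (j p : ℕ) : ℚ :=
  ∑ k ∈ Finset.range (j+1), (-1 : ℚ)^(j-k) * (j.choose k : ℚ) * (k : ℚ)^p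

lemma neg_one_pow_sub {j k : ℕ} (h : k ≤ j) :
    ((-1 : ℚ))^(j-k) = (-1 : ℚ)^j * (-1 : ℚ)^k := by
  rw [← pow_add, show j + k = (j - k) + 2*k by omega, pow_add, pow_mul]
  simp

lemma betaQ_zero {j : ℕ} (hj : 1 ≤ j) : betaQ j 0 = 0 := by
  have h := add_pow (-1 : ℚ) 1 j
  simp only [one_pow, mul_one] at h
  rw [neg_add_cancel, zero_pow (by omega : j ≠ 0)] at h
  unfold betaQ
  have hc : ∀ k ∈ Finset.range (j+1), (-1 : ℚ)^(j-k) * (j.choose k : ℚ) * (k:ℚ)^0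
      = (-1:ℚ)^j * ((-1:ℚ)^k * (j.choose k : ℚ)) := by
    intro k hk
    rw [Finset.mem_range] at hk
    rw [pow_zero, neg_one_pow_sub (by omega : k ≤ j)]
    ring
  rw [Finset.sum_congr rfl hc, ← Finset.mul_sum, ← h]
  ring

lemma betaQ_main : ∀ j : ℕ, (∀ p : ℕ, p < j → betaQ j p = 0) ∧ betaQ j j = (j.factorial : ℚ) := by
  intro j
  induction j with
  | zero =>
      exact ⟨fun p hp => by omega, by simp [betaQ]⟩
  | succ j ih =>
      have hrec : ∀ p' : ℕ, betaQ (j+1) (p'+1)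
          = ((j:ℚ)+1) * ∑ q ∈ Finset.range (p'+1), (p'.choose q : ℚ) * betaQ j q := by
        intro p'
        unfold betaQ
        rw [Finset.sum_range_succ' (fun k => (-1 : ℚ)^(j+1-k) * ((j+1).choose k : ℚ) * (k : ℚ)^(p'+1))]
        rw [show ((0:ℕ):ℚ)^(p'+1) = 0 by rw [Nat.cast_zero, zero_pow (by omega)], mul_zero, add_zero]
        have hterm : ∀ k ∈ Finset.range (j+1),
            (-1 : ℚ)^(j+1-(k+1)) * ((j+1).choose (k+1) : ℚ) * ((k+1 : ℕ) : ℚ)^(p'+1)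
            = ∑ q ∈ Finset.range (p'+1), ((j:ℚ)+1) * ((p'.choose q : ℚ) *
                ((-1:ℚ)^(j-k) * (j.choose k : ℚ) * (k:ℚ)^q)) := by
          intro k hk
          rw [Finset.mem_range] at hk
          have h1 : (j+1) - (k+1) = j - k := by omega
          have h2 : ((j+1).choose (k+1) : ℚ) * ((k+1 : ℕ) : ℚ) = ((j:ℚ)+1) * (j.choose k : ℚ) := by
            have h3 := congrArg (fun n : ℕ => (n : ℚ)) (Nat.add_one_mul_choose_eq j k)
            push_cast at h3 ⊢
            linarith
          have hpow : ((k+1:ℕ):ℚ)^(p'+1) = ∑ q ∈ Finset.range (p'+1),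
              (k:ℚ)^q * (p'.choose q : ℚ) * ((k+1:ℕ):ℚ) := by
            have h5 := add_pow (k:ℚ) 1 p'
            simp only [one_pow, mul_one] at h5
            rw [← Finset.sum_mul, ← h5]
            push_cast
            ring
          rw [h1, hpow, Finset.mul_sum]
          refine Finset.sum_congr rfl fun q _ => ?_
          linear_combination ((-1:ℚ))^(j-k) * (k:ℚ)^q * (p'.choose q : ℚ) * h2
        rw [Finset.sum_congr rfl hterm, Finset.sum_comm, Finset.mul_sum]
        refine Finset.sum_congr rfl fun q _ => ?_
        rw [← Finset.mul_sum, ← Finset.mul_sum]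
      constructor
      · intro p hp
        match p with
        | 0 => exact betaQ_zero (by omega)
        | (p''+1) =>
            rw [hrec p'']
            have : ∑ q ∈ Finset.range (p''+1), (p''.choose q : ℚ) * betaQ j q = 0 := by
              apply Finset.sum_eq_zero
              intro q hq
              rw [Finset.mem_range] at hq
              rw [ih.1 q (by omega), mul_zero]
            rw [this, mul_zero]
      · rw [show j + 1 = j + 1 from rfl, hrec j]
        rw [Finset.sum_eq_single j (fun q hq hqj => by
            rw [Finset.mem_range] at hq
            rw [ih.1 q (by omega), mul_zero])
          (fun h => absurd (Finset.self_mem_range_succ j) h)]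
        rw [Nat.choose_self, ih.2, Nat.factorial_succ]
        push_cast
        ring

lemma alpha_eq_one {j : ℕ} (hj : 1 ≤ j) :
    ∑ k ∈ Finset.Icc 1 j, ((k:ℚ)^k / (k.factorial : ℚ)) * ((-(k:ℚ))^(j-k) / (((j-k).factorial : ℚ))) = 1 := by
  have hfac : (j.factorial : ℚ) ≠ 0 := by
    exact_mod_cast Nat.factorial_ne_zero j
  have hterm : ∀ k ∈ Finset.Icc 1 j,
      ((k:ℚ)^k / (k.factorial : ℚ)) * ((-(k:ℚ))^(j-k) / (((j-k).factorial : ℚ)))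
      = ((-1:ℚ)^(j-k) * (j.choose k : ℚ) * (k:ℚ)^j) / (j.factorial : ℚ) := by
    intro k hk
    rw [Finset.mem_Icc] at hk
    have hkle : k ≤ j := hk.2
    have hc := congrArg (fun n : ℕ => (n : ℚ)) (Nat.choose_mul_factorial_mul_factorial hkle)
    push_cast at hc
    have hk1 : ((k.factorial : ℕ) : ℚ) ≠ 0 := by exact_mod_cast Nat.factorial_ne_zero k
    have hk2 : (((j-k).factorial : ℕ) : ℚ) ≠ 0 := by exact_mod_cast Nat.factorial_ne_zero (j-k)
    have hneg : (-(k:ℚ))^(j-k) = (-1:ℚ)^(j-k) * (k:ℚ)^(j-k) := by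
      rw [neg_pow]
    have hkj : (k:ℚ)^k * (k:ℚ)^(j-k) = (k:ℚ)^j := by
      rw [← pow_add]
      congr 1
      omega
    have hC : (j.choose k : ℚ) ≠ 0 := Nat.cast_ne_zero.mpr (Nat.choose_pos hkle).ne'
    rw [hneg, ← hkj, ← hc]
    field_simp
  rw [Finset.sum_congr rfl hterm, ← Finset.sum_div]
  rw [div_eq_one_iff_eq hfac]
  have hsub : Finset.Icc 1 j ⊆ Finset.range (j+1) := by
    intro x hx; rw [Finset.mem_Icc] at hx; rw [Finset.mem_range]; omega
  have hzero : ∀ x ∈ Finset.range (j+1), x ∉ Finset.Icc 1 j →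
      (-1:ℚ)^(j-x) * (j.choose x : ℚ) * (x:ℚ)^j = 0 := by
    intro x hx hx2
    rw [Finset.mem_range] at hx
    rw [Finset.mem_Icc, not_and, not_le] at hx2
    have : x = 0 := by omega
    subst this
    rw [Nat.cast_zero, zero_pow (by omega : j ≠ 0), mul_zero]
  have hext : ∑ k ∈ Finset.Icc 1 j, (-1:ℚ)^(j-k) * (j.choose k : ℚ) * (k:ℚ)^j
      = ∑ k ∈ Finset.range (j+1), (-1:ℚ)^(j-k) * (j.choose k : ℚ) * (k:ℚ)^j :=
    Finset.sum_subset hsub hzero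
  rw [hext]
  exact (betaQ_main j).2


lemma coeff_Sser_zero (t : ℕ → ℚ) : PowerSeries.coeff 0 (Sser t) = 0 := by
  simp [Sser]

lemma Sser'_add_thetaT (t : ℕ → ℚ) : Sser' t + theta (PowerSeries.mk t) = Sser t := by
  ext i
  simp only [map_add, Sser, Sser', coeff_theta, PowerSeries.coeff_mk]
  ring

lemma coeff_zero_mul' (f g : PowerSeries ℚ) :
    PowerSeries.coeff 0 (f * g) = PowerSeries.coeff 0 f * PowerSeries.coeff 0 g := by
  simp [PowerSeries.coeff_mul]


/-- with `T = ∑_{n≥1} t(n)·X^n` and `D = ∑_{n≥0} d(n)·X^n` in `ℚ⟦X⟧`, one has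
`∑_{k≥1} (k^k/k!)·(X·D)^k = T·(1−T)⁻¹`, expressed coefficientwise: for every `n`,
`coeff_{X^n}((1−T)·∑_{k=1}^{n} (k^k/k!)·(X·D)^k) = t n`. -/
theorem C_pointed_identity
    (t d : ℕ → ℚ)
    (ht0 : t 0 = 0) (ht1 : t 1 = 1)
    (htrec : ∀ n : ℕ, 2 ≤ n →
      ((n : ℚ) - 1) * t n =
        ∑ i ∈ Finset.Icc 1 (n - 1), t (n - i) * ∑ m ∈ Nat.divisors i, (m : ℚ) * t m)
    (hd0 : d 0 = 1) (hd1 : d 1 = 0)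
    (hdrec : ∀ n : ℕ, 2 ≤ n →
      (n : ℚ) * d n =
        ∑ i ∈ Finset.Icc 2 n, d (n - i) * ∑ m ∈ (Nat.divisors i).erase i, (m : ℚ) * t m) :
    ∀ n : ℕ,
      PowerSeries.coeff n
        ((1 - PowerSeries.mk t) *
          ∑ k ∈ Finset.Icc 1 n,
            PowerSeries.C ((k : ℚ) ^ k / (k.factorial : ℚ)) *
              ((PowerSeries.X : PowerSeries ℚ) * PowerSeries.mk d) ^ k) = t n := by
  intro n
  rcases Nat.eq_zero_or_pos n with hn0 | hn1
  · subst hn0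
    rw [Finset.Icc_eq_empty (by omega), Finset.sum_empty, mul_zero, map_zero, ht0]
  -- basic coefficients
  have hT0 : PowerSeries.coeff 0 (PowerSeries.mk t) = 0 := by
    rw [PowerSeries.coeff_mk]; exact ht0
  have hT1 : PowerSeries.coeff 1 (PowerSeries.mk t) = 1 := by
    rw [PowerSeries.coeff_mk]; exact ht1
  have hθT := theta_T t ht0 ht1 htrec
  have hθD := theta_D t d ht1 hd1 hdrec
  -- Etil group law
  have hEadd : ∀ a b : ℚ, Etil t a * Etil t b = Etil t (a + b) := by
    intro a b
    refine ode_unique_zero (PowerSeries.C (a+b) * theta (PowerSeries.mk t)) _ _ ?_ ?_ ?_ ?_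
    · rw [PowerSeries.coeff_C_mul, coeff_theta]; simp
    · rw [theta_mul, theta_Etil ht0 a, theta_Etil ht0 b, map_add]
      ring
    · rw [theta_Etil ht0 (a+b)]
    · rw [coeff_zero_mul', coeff_Etil_zero, coeff_Etil_zero, coeff_Etil_zero, one_mul]
  -- the main ODE: X·D·E(1) = T
  have hU : (PowerSeries.X * PowerSeries.mk d) * Etil t 1 = PowerSeries.mk t := by
    refine ode_unique_one (1 + Sser t) _ _ ?_ ?_ ?_ ?_ ?_
    · rw [map_add, coeff_Sser_zero]
      simp
    · rw [theta_mul, theta_X_mul, theta_Etil ht0 1, map_one, one_mul, hθD, hθT]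
      have hSS := Sser'_add_thetaT t
      rw [hθT] at hSS
      linear_combination (PowerSeries.X * PowerSeries.mk d * Etil t 1) * hSS
    · exact hθT
    · rw [coeff_zero_mul', coeff_zero_mul', hT0]
      simp
    · rw [mul_assoc, PowerSeries.coeff_succ_X_mul 0, coeff_zero_mul', coeff_Etil_zero,
        PowerSeries.coeff_mk, hd0, hT1, mul_one]
  have hXD : PowerSeries.X * PowerSeries.mk d = PowerSeries.mk t * Etil t (-1) := by
    have h1 : Etil t 1 * Etil t (-1) = 1 := by
      rw [hEadd 1 (-1)]
      norm_num [Etil_zero]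
    calc PowerSeries.X * PowerSeries.mk d
        = ((PowerSeries.X * PowerSeries.mk d) * Etil t 1) * Etil t (-1) := by
          rw [mul_assoc, h1, mul_one]
      _ = PowerSeries.mk t * Etil t (-1) := by rw [hU]
  have hXDpow : ∀ k : ℕ, (PowerSeries.X * PowerSeries.mk d)^k
      = (PowerSeries.mk t)^k * Etil t (-(k:ℚ)) := by
    intro k
    induction k with
    | zero => simp [Etil_zero]
    | succ k ih =>
        rw [pow_succ, ih, hXD, pow_succ]
        have : (PowerSeries.mk t)^k * Etil t (-(k:ℚ)) * (PowerSeries.mk t * Etil t (-1))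
            = (PowerSeries.mk t)^k * PowerSeries.mk t * (Etil t (-(k:ℚ)) * Etil t (-1)) := by
          ring
        rw [this, hEadd]
        congr 1
        push_cast
        ring
  -- coefficientwise comparison with the geometric sum
  have key : ∀ b : ℕ, b ≤ n →
      PowerSeries.coeff b (∑ k ∈ Finset.Icc 1 n,
        PowerSeries.C ((k : ℚ) ^ k / (k.factorial : ℚ)) *
          (PowerSeries.X * PowerSeries.mk d) ^ k)
      = PowerSeries.coeff b (∑ j ∈ Finset.Icc 1 n, (PowerSeries.mk t)^j) := by
    intro b hb
    rw [map_sum, map_sum]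
    have step1 : ∀ k ∈ Finset.Icc 1 n,
        PowerSeries.coeff b (PowerSeries.C ((k : ℚ) ^ k / (k.factorial : ℚ)) *
          (PowerSeries.X * PowerSeries.mk d) ^ k)
        = ∑ m ∈ Finset.range (b+1), ((k : ℚ) ^ k / (k.factorial : ℚ)) *
            ((-(k:ℚ)) ^ m / (m.factorial : ℚ) *
              PowerSeries.coeff b ((PowerSeries.mk t) ^ (k + m))) := by
      intro k _
      rw [PowerSeries.coeff_C_mul, hXDpow k, coeff_Tpow_mul_Etil ht0, Finset.mul_sum]
    rw [Finset.sum_congr rfl step1]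
    set T := PowerSeries.mk t with hT
    -- restrict the outer sum to k ≤ b
    have hsubk : Finset.Icc 1 b ⊆ Finset.Icc 1 n := by
      intro x hx; rw [Finset.mem_Icc] at *; omega
    have hzk : ∀ k ∈ Finset.Icc 1 n, k ∉ Finset.Icc 1 b →
        ∑ m ∈ Finset.range (b+1), ((k : ℚ) ^ k / (k.factorial : ℚ)) *
            ((-(k:ℚ)) ^ m / (m.factorial : ℚ) * PowerSeries.coeff b (T ^ (k + m))) = 0 := by
      intro k hk hk2
      rw [Finset.mem_Icc] at hk
      rw [Finset.mem_Icc, not_and, not_le] at hk2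
      apply Finset.sum_eq_zero
      intro m _
      rw [coeff_pow_eq_zero_of_lt hT0 (show b < k + m by have := hk2 hk.1; omega), mul_zero, mul_zero]
    rw [← Finset.sum_subset hsubk hzk]
    -- restrict the inner sums to m ≤ b - k
    have hm : ∀ k ∈ Finset.Icc 1 b,
        ∑ m ∈ Finset.range (b+1), ((k : ℚ) ^ k / (k.factorial : ℚ)) *
            ((-(k:ℚ)) ^ m / (m.factorial : ℚ) * PowerSeries.coeff b (T ^ (k + m)))
        = ∑ m ∈ Finset.range (b+1-k), ((k : ℚ) ^ k / (k.factorial : ℚ)) *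
            ((-(k:ℚ)) ^ m / (m.factorial : ℚ) * PowerSeries.coeff b (T ^ (k + m))) := by
      intro k hk
      rw [Finset.mem_Icc] at hk
      have hsubm : Finset.range (b+1-k) ⊆ Finset.range (b+1) := by
        intro x hx; rw [Finset.mem_range] at *; omega
      have hzm : ∀ m ∈ Finset.range (b+1), m ∉ Finset.range (b+1-k) →
          ((k : ℚ) ^ k / (k.factorial : ℚ)) *
            ((-(k:ℚ)) ^ m / (m.factorial : ℚ) * PowerSeries.coeff b (T ^ (k + m))) = 0 := by
        intro m hm1 hm2
        rw [Finset.mem_range] at hm1 hm2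
        rw [coeff_pow_eq_zero_of_lt hT0 (show b < k + m by omega), mul_zero, mul_zero]
      exact (Finset.sum_subset hsubm hzm).symm
    rw [Finset.sum_congr rfl hm]
    -- rewrite the RHS using the combinatorial identity
    have hsubj : Finset.Icc 1 b ⊆ Finset.Icc 1 n := hsubk
    have hzj : ∀ j ∈ Finset.Icc 1 n, j ∉ Finset.Icc 1 b → PowerSeries.coeff b (T ^ j) = 0 := by
      intro j hj hj2
      rw [Finset.mem_Icc] at hj
      rw [Finset.mem_Icc, not_and, not_le] at hj2
      exact coeff_pow_eq_zero_of_lt hT0 (by have := hj2 hj.1; omega)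
    rw [← Finset.sum_subset hsubj hzj]
    have hRj : ∀ j ∈ Finset.Icc 1 b, PowerSeries.coeff b (T ^ j)
        = ∑ k ∈ Finset.Icc 1 j, ((k:ℚ)^k / (k.factorial : ℚ)) *
            ((-(k:ℚ))^(j-k) / (((j-k).factorial : ℚ))) * PowerSeries.coeff b (T ^ j) := by
      intro j hj
      rw [Finset.mem_Icc] at hj
      rw [← Finset.sum_mul, alpha_eq_one hj.1, one_mul]
    rw [Finset.sum_congr rfl hRj]
    -- sigma reindex
    rw [Finset.sum_sigma', Finset.sum_sigma']
    refine Finset.sum_nbij' (fun p => ⟨p.1 + p.2, p.1⟩) (fun q => ⟨q.2, q.1 - q.2⟩) ?_ ?_ ?_ ?_ ?_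
    · rintro ⟨k, m⟩ hp
      simp only [Finset.mem_sigma, Finset.mem_Icc, Finset.mem_range] at hp ⊢
      omega
    · rintro ⟨j, k⟩ hq
      simp only [Finset.mem_sigma, Finset.mem_Icc, Finset.mem_range] at hq ⊢
      omega
    · rintro ⟨k, m⟩ hp
      simp only [Finset.mem_sigma, Finset.mem_Icc, Finset.mem_range] at hp
      show (⟨k, k + m - k⟩ : Σ _ : ℕ, ℕ) = ⟨k, m⟩
      rw [show k + m - k = m from by omega]
    · rintro ⟨j, k⟩ hq
      simp only [Finset.mem_sigma, Finset.mem_Icc, Finset.mem_range] at hq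
      show (⟨k + (j - k), k⟩ : Σ _ : ℕ, ℕ) = ⟨j, k⟩
      rw [show k + (j - k) = j from by omega]
    · rintro ⟨k, m⟩ hp
      simp only [Finset.mem_sigma, Finset.mem_Icc, Finset.mem_range] at hp
      simp only
      rw [show k + m - k = m from by omega]
      ring
  -- final assembly
  rw [PowerSeries.coeff_mul]
  have hrepl : ∀ p ∈ antidiagonal n,
      PowerSeries.coeff p.1 (1 - PowerSeries.mk t) *
        PowerSeries.coeff p.2 (∑ k ∈ Finset.Icc 1 n,
          PowerSeries.C ((k : ℚ) ^ k / (k.factorial : ℚ)) *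
            (PowerSeries.X * PowerSeries.mk d) ^ k)
      = PowerSeries.coeff p.1 (1 - PowerSeries.mk t) *
        PowerSeries.coeff p.2 (∑ j ∈ Finset.Icc 1 n, (PowerSeries.mk t)^j) := by
    intro p hp
    rw [Finset.HasAntidiagonal.mem_antidiagonal] at hp
    rw [key p.2 (by omega)]
  rw [Finset.sum_congr rfl hrepl, ← PowerSeries.coeff_mul]
  -- geometric sum
  have h1 : ∑ j ∈ Finset.Icc 1 n, (PowerSeries.mk t)^j
      = PowerSeries.mk t * ∑ i ∈ Finset.range n, (PowerSeries.mk t)^i := by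
    rw [Finset.mul_sum]
    refine Finset.sum_nbij' (fun j => j - 1) (fun i => i + 1) ?_ ?_ ?_ ?_ ?_
    · intro a ha; rw [Finset.mem_Icc] at ha
      exact Finset.mem_range.mpr (show a - 1 < n by omega)
    · intro a ha; rw [Finset.mem_range] at ha
      exact Finset.mem_Icc.mpr (show 1 ≤ a + 1 ∧ a + 1 ≤ n by omega)
    · intro a ha; rw [Finset.mem_Icc] at ha; show a - 1 + 1 = a; omega
    · intro a ha; rw [Finset.mem_range] at ha; show a + 1 - 1 = a; omega
    · intro a ha; rw [Finset.mem_Icc] at ha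
      show (PowerSeries.mk t) ^ a = PowerSeries.mk t * (PowerSeries.mk t) ^ (a - 1)
      rw [← pow_succ']
      congr 1
      omega
  have h2 : (1 - PowerSeries.mk t) * ∑ i ∈ Finset.range n, (PowerSeries.mk t)^i
      = 1 - (PowerSeries.mk t)^n := by
    linear_combination -geom_sum_mul (PowerSeries.mk t) n
  have hgeom : (1 - PowerSeries.mk t) * ∑ j ∈ Finset.Icc 1 n, (PowerSeries.mk t)^j
      = PowerSeries.mk t - (PowerSeries.mk t)^(n+1) := by
    rw [h1]
    linear_combination (PowerSeries.mk t) * h2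
  rw [hgeom, map_sub, PowerSeries.coeff_mk,
    coeff_pow_eq_zero_of_lt hT0 (show n < n + 1 by omega), sub_zero]
end

section
/- The radius of convergence of the power series ∑_{n≥0} d(n)·z^n equals √ρ. -/
open PowerSeries Filter Topology

/-- `r` is the radius of convergence of the power series `∑ a n · z^n`. -/
def IsRadiusOfConv (a : ℕ → ℝ) (r : ℝ) : Prop :=
  (∀ s : ℝ, 0 ≤ s → s < r → Summable fun n => |a n| * s ^ n) ∧
  (∀ s : ℝ, r < s → ¬ Summable fun n => |a n| * s ^ n)


lemma t_facts (t : ℕ → ℚ) (ht0 : t 0 = 0) (ht1 : t 1 = 1)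
    (htrec : ∀ n : ℕ, 2 ≤ n →
      ((n : ℚ) - 1) * t n =
        ∑ i ∈ Finset.Icc 1 (n - 1), t (n - i) * ∑ m ∈ Nat.divisors i, (m : ℚ) * t m) :
    ∀ n : ℕ, 0 ≤ t n ∧ (1 ≤ n → 1 ≤ t n) := by
  intro n
  induction n using Nat.strong_induction_on with
  | _ n ih =>
    match n with
    | 0 => exact ⟨ht0.ge, by omega⟩
    | 1 => exact ⟨by rw [ht1]; norm_num, fun _ => ht1.ge⟩
    | (k+2) =>
      have hrec := htrec (k+2) (by omega)
      have hnn : ∀ i ∈ Finset.Icc 1 (k+1),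
          0 ≤ t (k+2-i) * ∑ m ∈ Nat.divisors i, (m : ℚ) * t m := by
        intro i hi
        simp only [Finset.mem_Icc] at hi
        apply mul_nonneg
        · exact (ih (k+2-i) (by omega)).1
        · apply Finset.sum_nonneg
          intro m hm
          have hmle := Nat.divisor_le hm
          exact mul_nonneg (by positivity) (ih m (by omega)).1
      have hsub : (k+2) - 1 = k+1 := by omega
      rw [hsub] at hrec
      have hinner : (↑(k+1) : ℚ) * t (k+1) ≤ ∑ m ∈ Nat.divisors (k+1), (m : ℚ) * t m := by
        apply Finset.single_le_sum (f := fun m : ℕ => (m : ℚ) * t m)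
        · intro m hm
          have hmle := Nat.divisor_le hm
          exact mul_nonneg (by positivity) (ih m (by omega)).1
        · exact Nat.mem_divisors_self _ (by omega)
      have hone : t (k+2-(k+1)) * ∑ m ∈ Nat.divisors (k+1), (m : ℚ) * t m
          ≤ ∑ i ∈ Finset.Icc 1 (k+1), t (k+2-i) * ∑ m ∈ Nat.divisors i, (m : ℚ) * t m := by
        apply Finset.single_le_sum hnn
        simp [Finset.mem_Icc]
      have h1 : t (k+2-(k+1)) = 1 := by
        have : k+2-(k+1) = 1 := by omega
        rw [this, ht1]
      rw [h1, one_mul] at hone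
      have htk1 : (1 : ℚ) ≤ t (k+1) := (ih (k+1) (by omega)).2 (by omega)
      have hkpos : (0 : ℚ) < (k : ℚ) + 1 := by positivity
      have hcast : ((k+2 : ℕ) : ℚ) - 1 = (k : ℚ) + 1 := by push_cast; ring
      rw [hcast] at hrec
      constructor
      · have hrhs : (0:ℚ) ≤ ((k : ℚ) + 1) * t (k+2) := hrec ▸ Finset.sum_nonneg hnn
        have h0 : ((k : ℚ) + 1) * 0 ≤ ((k : ℚ) + 1) * t (k+2) := by rwa [mul_zero]
        exact le_of_mul_le_mul_left h0 hkpos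
      · intro _
        have : ((k : ℚ) + 1) * 1 ≤ ((k : ℚ) + 1) * t (k+2) := by
          rw [mul_one]
          calc (k : ℚ) + 1 = (↑(k+1) : ℚ) * 1 := by push_cast; ring
          _ ≤ (↑(k+1) : ℚ) * t (k+1) := by
              apply mul_le_mul_of_nonneg_left htk1 (by positivity)
          _ ≤ ∑ m ∈ Nat.divisors (k+1), (m : ℚ) * t m := hinner
          _ ≤ ∑ i ∈ Finset.Icc 1 (k+1), t (k+2-i) * ∑ m ∈ Nat.divisors i, (m : ℚ) * t m := hone
          _ = ((k : ℚ) + 1) * t (k+2) := hrec.symm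
        exact le_of_mul_le_mul_left this hkpos
section
variable (t d : ℕ → ℚ)

lemma d_nonneg (htnn : ∀ n : ℕ, 0 ≤ t n) (hd0 : d 0 = 1) (hd1 : d 1 = 0)
    (hdrec : ∀ n : ℕ, 2 ≤ n →
      (n : ℚ) * d n =
        ∑ i ∈ Finset.Icc 2 n, d (n - i) * ∑ m ∈ (Nat.divisors i).erase i, (m : ℚ) * t m) :
    ∀ n : ℕ, 0 ≤ d n := by
  intro n
  induction n using Nat.strong_induction_on with
  | _ n ih =>
    match n with
    | 0 => rw [hd0]; norm_num
    | 1 => rw [hd1]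
    | (k+2) =>
      have hrec := hdrec (k+2) (by omega)
      have hnn : ∀ i ∈ Finset.Icc 2 (k+2),
          0 ≤ d (k+2-i) * ∑ m ∈ (Nat.divisors i).erase i, (m : ℚ) * t m := by
        intro i hi
        simp only [Finset.mem_Icc] at hi
        refine mul_nonneg (ih (k+2-i) (by omega)) (Finset.sum_nonneg fun m _ => ?_)
        exact mul_nonneg (by positivity) (htnn m)
      have hrhs : (0:ℚ) ≤ (↑(k+2) : ℚ) * d (k+2) := hrec ▸ Finset.sum_nonneg hnn
      have hkpos : (0:ℚ) < (↑(k+2) : ℚ) := by positivity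
      have h0 : (↑(k+2) : ℚ) * 0 ≤ (↑(k+2) : ℚ) * d (k+2) := by rwa [mul_zero]
      exact le_of_mul_le_mul_left h0 hkpos

lemma d_lower (htnn : ∀ n : ℕ, 0 ≤ t n)
    (hdnn : ∀ n : ℕ, 0 ≤ d n) (hd0 : d 0 = 1)
    (hdrec : ∀ n : ℕ, 2 ≤ n →
      (n : ℚ) * d n =
        ∑ i ∈ Finset.Icc 2 n, d (n - i) * ∑ m ∈ (Nat.divisors i).erase i, (m : ℚ) * t m) :
    ∀ m : ℕ, 1 ≤ m → t m / 2 ≤ d (2*m) := by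
  intro m hm
  have hrec := hdrec (2*m) (by omega)
  have hnn : ∀ i ∈ Finset.Icc 2 (2*m),
      0 ≤ d (2*m-i) * ∑ j ∈ (Nat.divisors i).erase i, (j : ℚ) * t j := by
    intro i _
    refine mul_nonneg (hdnn _) (Finset.sum_nonneg fun j _ => ?_)
    exact mul_nonneg (by positivity) (htnn j)
  have hone : d (2*m-(2*m)) * ∑ j ∈ (Nat.divisors (2*m)).erase (2*m), (j : ℚ) * t j
      ≤ ∑ i ∈ Finset.Icc 2 (2*m), d (2*m-i) * ∑ j ∈ (Nat.divisors i).erase i, (j : ℚ) * t j := by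
    apply Finset.single_le_sum hnn
    simp [Finset.mem_Icc]; omega
  rw [Nat.sub_self, hd0, one_mul] at hone
  have hmem : m ∈ (Nat.divisors (2*m)).erase (2*m) := by
    rw [Finset.mem_erase, Nat.mem_divisors]
    exact ⟨by omega, ⟨2, by ring⟩, by omega⟩
  have hinner : (m : ℚ) * t m ≤ ∑ j ∈ (Nat.divisors (2*m)).erase (2*m), (j : ℚ) * t j := by
    apply Finset.single_le_sum (f := fun j : ℕ => (j : ℚ) * t j) _ hmem
    intro j _
    exact mul_nonneg (by positivity) (htnn j)
  have hfin : (m : ℚ) * t m ≤ (↑(2*m) : ℚ) * d (2*m) := le_trans hinner (hone.trans hrec.ge)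
  have hmpos : (0:ℚ) < (m:ℚ) := by exact_mod_cast hm
  have h2 : (↑(2*m) : ℚ) * d (2*m) = (m:ℚ) * (2 * d (2*m)) := by push_cast; ring
  rw [h2] at hfin
  have := le_of_mul_le_mul_left hfin hmpos
  linarith

/-- the radius of convergence of `∑_{n≥0} d(n)·z^n` equals `√ρ`. -/
theorem dForest_radius_of_convergence
    (t d : ℕ → ℚ)
    (ht0 : t 0 = 0) (ht1 : t 1 = 1)
    (htrec : ∀ n : ℕ, 2 ≤ n →
      ((n : ℚ) - 1) * t n =
        ∑ i ∈ Finset.Icc 1 (n - 1), t (n - i) * ∑ m ∈ Nat.divisors i, (m : ℚ) * t m)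
    (hd0 : d 0 = 1) (hd1 : d 1 = 0)
    (hdrec : ∀ n : ℕ, 2 ≤ n →
      (n : ℚ) * d n =
        ∑ i ∈ Finset.Icc 2 n, d (n - i) * ∑ m ∈ (Nat.divisors i).erase i, (m : ℚ) * t m)
    (ρ : ℝ) (hρ : IsRadiusOfConv (fun n => (t n : ℝ)) ρ) :
    IsRadiusOfConv (fun n => (d n : ℝ)) (Real.sqrt ρ) := by
  have htf := t_facts t ht0 ht1 htrec
  have htnn : ∀ n, 0 ≤ t n := fun n => (htf n).1
  have htnnR : ∀ n, (0:ℝ) ≤ ((t n : ℚ) : ℝ) := fun n => by exact_mod_cast htnn n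
  have hdnn := d_nonneg t d htnn hd0 hd1 hdrec
  have hdnnR : ∀ n, (0:ℝ) ≤ ((d n : ℚ) : ℝ) := fun n => by exact_mod_cast hdnn n
  have hdl := d_lower t d htnn hdnn hd0 hdrec
  obtain ⟨hρ1, hρ2⟩ := hρ
  have hρ0 : 0 ≤ ρ := by
    by_contra h
    push_neg at h
    apply hρ2 0 h
    have heq : (fun n : ℕ => |((t n : ℚ) : ℝ)| * 0 ^ n) = fun _ => (0:ℝ) := by
      funext n
      match n with
      | 0 => simp [ht0]
      | (k+1) => simp
    rw [heq]
    exact summable_zero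
  have hρle1 : ρ ≤ 1 := by
    by_contra h
    push_neg at h
    have hsum := hρ1 1 zero_le_one h
    have h1 : ∀ n : ℕ, 1 ≤ n → (1:ℝ) ≤ |((t n : ℚ):ℝ)| * 1 ^ n := by
      intro n hn
      rw [one_pow, mul_one, abs_of_nonneg (htnnR n)]
      exact_mod_cast (htf n).2 hn
    have htend := hsum.tendsto_atTop_zero
    have h2 : (1:ℝ) ≤ 0 := ge_of_tendsto htend (eventually_atTop.2 ⟨1, h1⟩)
    linarith
  constructor
  · -- summability for s < √ρ
    intro s hs0 hss
    have hsqpos : 0 < Real.sqrt ρ := lt_of_le_of_lt hs0 hss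
    set x : ℝ := (s + Real.sqrt ρ)/2 with hxdef
    have hsx : s < x := by rw [hxdef]; linarith
    have hxρ : x < Real.sqrt ρ := by rw [hxdef]; linarith
    have hx0 : 0 < x := lt_of_le_of_lt hs0 hsx
    have hx2 : x^2 < ρ := (Real.lt_sqrt hx0.le).mp hxρ
    set r : ℝ := (x^2 + ρ)/2 with hrdef
    have hr1 : x^2 < r := by rw [hrdef]; linarith
    have hr2 : r < ρ := by rw [hrdef]; linarith
    have hr0 : 0 < r := lt_trans (by positivity) hr1
    have hrlt1 : r < 1 := lt_of_lt_of_le hr2 hρle1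
    set w : ℝ := Real.sqrt r with hwdef
    have hw2 : w^2 = r := Real.sq_sqrt hr0.le
    have hw0 : 0 < w := Real.sqrt_pos.mpr hr0
    have hw1 : w < 1 := by
      rw [hwdef]
      rw [show (1:ℝ) = Real.sqrt 1 by simp]
      exact Real.sqrt_lt_sqrt hr0.le hrlt1
    have hxw : x < w := (Real.lt_sqrt hx0.le).mpr hr1
    have hsumt : Summable fun m : ℕ => |((t m : ℚ):ℝ)| * r ^ m := hρ1 r hr0.le hr2
    set A : ℝ := ∑' m : ℕ, |((t m : ℚ):ℝ)| * r ^ m with hAdef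
    have hA : ∀ m : ℕ, ((t m:ℚ):ℝ) * r ^ m ≤ A := by
      intro m
      have h := Summable.le_tsum hsumt m (fun j _ => mul_nonneg (abs_nonneg _) (pow_nonneg hr0.le j))
      rwa [abs_of_nonneg (htnnR m)] at h
    have hA0 : 0 ≤ A :=
      tsum_nonneg fun j => mul_nonneg (abs_nonneg _) (pow_nonneg hr0.le j)
    clear_value A
    clear_value w
    clear_value r
    clear_value x
    -- bound the coefficient sums
    have hcb : ∀ i : ℕ, 2 ≤ i →
        ((∑ m ∈ (Nat.divisors i).erase i, (m:ℚ) * t m : ℚ) : ℝ) ≤ (i:ℝ)^2 * (A / w ^ i) := by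
      intro i hi
      push_cast
      have hterm : ∀ m ∈ (Nat.divisors i).erase i,
          (m:ℝ) * ((t m:ℚ):ℝ) ≤ (i:ℝ) * (A / w ^ i) := by
        intro m hm
        rw [Finset.mem_erase, Nat.mem_divisors] at hm
        obtain ⟨hne, hdvd, hi0⟩ := hm
        obtain ⟨c, hc⟩ := hdvd
        have hc2 : 2 ≤ c := by
          rcases Nat.lt_or_ge c 2 with h | h
          · interval_cases c <;> omega
          · exact h
        have h2m : 2*m ≤ i := by
          calc 2*m = m*2 := by ring
          _ ≤ m*c := Nat.mul_le_mul_left m hc2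
          _ = i := hc.symm
        have hm_le : m ≤ i := Nat.le_of_dvd (by omega) ⟨c, hc⟩
        have htm : ((t m:ℚ):ℝ) ≤ A / r ^ m := by
          rw [le_div_iff₀ (pow_pos hr0 m)]
          exact hA m
        have hpow : r ^ m = w ^ (2*m) := by
          rw [pow_mul, hw2]
        have hwle : w ^ i ≤ w ^ (2*m) := pow_le_pow_of_le_one hw0.le hw1.le h2m
        calc (m:ℝ) * ((t m:ℚ):ℝ)
            ≤ (i:ℝ) * ((t m:ℚ):ℝ) := by
              apply mul_le_mul_of_nonneg_right _ (htnnR m)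
              exact_mod_cast hm_le
        _ ≤ (i:ℝ) * (A / w ^ i) := by
              apply mul_le_mul_of_nonneg_left _ (by positivity)
              calc ((t m:ℚ):ℝ) ≤ A / r ^ m := htm
              _ = A / w ^ (2*m) := by rw [hpow]
              _ ≤ A / w ^ i := by
                  apply div_le_div_of_nonneg_left hA0 (pow_pos hw0 _) hwle
      have hcard : (((Nat.divisors i).erase i).card : ℝ) ≤ (i:ℝ) := by
        have h1 : ((Nat.divisors i).erase i).card ≤ (Nat.divisors i).card :=
          Finset.card_le_card (Finset.erase_subset _ _)
        have h2 : Nat.divisors i ⊆ Finset.Icc 1 i := by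
          intro m hm
          rw [Nat.mem_divisors] at hm
          rw [Finset.mem_Icc]
          have := Nat.le_of_dvd (by omega) hm.1
          have hm0 : m ≠ 0 := by
            rintro rfl
            exact hm.2 (zero_dvd_iff.mp hm.1)
          omega
        have h3 : (Nat.divisors i).card ≤ i := by
          calc (Nat.divisors i).card ≤ (Finset.Icc 1 i).card := Finset.card_le_card h2
          _ = i := by rw [Nat.card_Icc]; omega
        exact_mod_cast le_trans h1 h3
      calc ∑ m ∈ (Nat.divisors i).erase i, (m:ℝ) * ((t m:ℚ):ℝ)
          ≤ (((Nat.divisors i).erase i).card : ℝ) * ((i:ℝ) * (A / w ^ i)) := by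
            have := Finset.sum_le_card_nsmul _ _ _ hterm
            rwa [nsmul_eq_mul] at this
      _ ≤ (i:ℝ) * ((i:ℝ) * (A / w ^ i)) := by
            apply mul_le_mul_of_nonneg_right hcard (by positivity)
      _ = (i:ℝ)^2 * (A / w ^ i) := by ring
    -- geometric majorant and its sum
    set q : ℝ := x / w with hqdef
    have hq0 : 0 ≤ q := by positivity
    have hq1 : q < 1 := (div_lt_one hw0).mpr hxw
    have hmaj : Summable fun i : ℕ => A * ((i:ℝ)^2 * q ^ i) := by
      have := summable_pow_mul_geometric_of_norm_lt_one (R := ℝ) 2 (by rwa [Real.norm_eq_abs, abs_of_nonneg hq0])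
      exact this.mul_left A
    set S : ℝ := ∑' i : ℕ, A * ((i:ℝ)^2 * q ^ i) with hSdef
    have hS0 : 0 ≤ S := tsum_nonneg fun i => by positivity
    clear_value q S
    have hgle : ∀ i : ℕ, 2 ≤ i →
        ((∑ m ∈ (Nat.divisors i).erase i, (m:ℚ) * t m : ℚ) : ℝ) * x ^ i ≤ A * ((i:ℝ)^2 * q ^ i) := by
      intro i hi
      have h1 := hcb i hi
      have h2 : ((∑ m ∈ (Nat.divisors i).erase i, (m:ℚ) * t m : ℚ) : ℝ) * x ^ i
          ≤ ((i:ℝ)^2 * (A / w ^ i)) * x ^ i :=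
        mul_le_mul_of_nonneg_right h1 (by positivity)
      calc ((∑ m ∈ (Nat.divisors i).erase i, (m:ℚ) * t m : ℚ) : ℝ) * x ^ i
          ≤ ((i:ℝ)^2 * (A / w ^ i)) * x ^ i := h2
      _ = A * ((i:ℝ)^2 * q ^ i) := by
          rw [hqdef, div_pow]
          field_simp
    have hgnn : ∀ i : ℕ, (0:ℝ) ≤ ((∑ m ∈ (Nat.divisors i).erase i, (m:ℚ) * t m : ℚ) : ℝ) * x ^ i := by
      intro i
      apply mul_nonneg _ (by positivity)
      have : (0:ℚ) ≤ ∑ m ∈ (Nat.divisors i).erase i, (m:ℚ) * t m :=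
        Finset.sum_nonneg fun m _ => mul_nonneg (by positivity) (htnn m)
      exact_mod_cast this
    have hpartial : ∀ n : ℕ,
        ∑ i ∈ Finset.Icc 2 n, ((∑ m ∈ (Nat.divisors i).erase i, (m:ℚ) * t m : ℚ) : ℝ) * x ^ i ≤ S := by
      intro n
      calc ∑ i ∈ Finset.Icc 2 n, ((∑ m ∈ (Nat.divisors i).erase i, (m:ℚ) * t m : ℚ) : ℝ) * x ^ i
          ≤ ∑ i ∈ Finset.Icc 2 n, A * ((i:ℝ)^2 * q ^ i) := by
            apply Finset.sum_le_sum
            intro i hi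
            rw [Finset.mem_Icc] at hi
            exact hgle i hi.1
      _ ≤ S := by
            rw [hSdef]
            exact Summable.sum_le_tsum _ (fun i _ => by positivity) hmaj
    -- uniform bound on d n * x^n
    set n₀ : ℕ := ⌈S⌉₊ + 2 with hn₀def
    have hn₀S : S ≤ (n₀ : ℝ) := by
      calc S ≤ (⌈S⌉₊ : ℝ) := Nat.le_ceil S
      _ ≤ (n₀ : ℝ) := by exact_mod_cast Nat.le_add_right _ 2
    set K : ℝ := (∑ n ∈ Finset.range n₀, ((d n : ℚ) : ℝ) * x ^ n) + 1 with hKdef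
    have hK0 : 0 < K := by
      rw [hKdef]
      have : (0:ℝ) ≤ ∑ n ∈ Finset.range n₀, ((d n : ℚ) : ℝ) * x ^ n :=
        Finset.sum_nonneg fun n _ => mul_nonneg (hdnnR n) (by positivity)
      linarith
    have hKsmall : ∀ n < n₀, ((d n : ℚ) : ℝ) * x ^ n ≤ K := by
      intro n hn
      rw [hKdef]
      have h1 : ((d n : ℚ) : ℝ) * x ^ n ≤ ∑ k ∈ Finset.range n₀, ((d k : ℚ) : ℝ) * x ^ k :=
        Finset.single_le_sum (f := fun k : ℕ => ((d k : ℚ) : ℝ) * x ^ k)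
          (fun k _ => mul_nonneg (hdnnR k) (by positivity)) (Finset.mem_range.mpr hn)
      linarith
    have hmain : ∀ n : ℕ, ((d n : ℚ) : ℝ) * x ^ n ≤ K := by
      intro n
      induction n using Nat.strong_induction_on with
      | _ n ih =>
        rcases Nat.lt_or_ge n n₀ with h | h
        · exact hKsmall n h
        · have hn2 : 2 ≤ n := by omega
          have hrec := hdrec n hn2
          have hrecR : (n:ℝ) * ((d n:ℚ):ℝ) =
              ∑ i ∈ Finset.Icc 2 n, ((d (n-i):ℚ):ℝ) *
                ((∑ m ∈ (Nat.divisors i).erase i, (m:ℚ) * t m : ℚ) : ℝ) := by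
            exact_mod_cast congrArg (Rat.cast : ℚ → ℝ) hrec
          have hkey : (n:ℝ) * (((d n:ℚ):ℝ) * x ^ n) =
              ∑ i ∈ Finset.Icc 2 n, (((d (n-i):ℚ):ℝ) * x ^ (n-i)) *
                (((∑ m ∈ (Nat.divisors i).erase i, (m:ℚ) * t m : ℚ) : ℝ) * x ^ i) := by
            rw [← mul_assoc, hrecR, Finset.sum_mul]
            apply Finset.sum_congr rfl
            intro i hi
            rw [Finset.mem_Icc] at hi
            have : x ^ (n-i) * x ^ i = x ^ n := by
              rw [← pow_add]
              congr 1
              omega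
            calc ((d (n-i):ℚ):ℝ) * ((∑ m ∈ (Nat.divisors i).erase i, (m:ℚ) * t m : ℚ) : ℝ) * x ^ n
                = ((d (n-i):ℚ):ℝ) * ((∑ m ∈ (Nat.divisors i).erase i, (m:ℚ) * t m : ℚ) : ℝ)
                  * (x ^ (n-i) * x ^ i) := by rw [this]
            _ = ((d (n-i):ℚ):ℝ) * x ^ (n-i) *
                  (((∑ m ∈ (Nat.divisors i).erase i, (m:ℚ) * t m : ℚ) : ℝ) * x ^ i) := by ring
          have hbound : (n:ℝ) * (((d n:ℚ):ℝ) * x ^ n) ≤ K * S := by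
            rw [hkey]
            calc ∑ i ∈ Finset.Icc 2 n, (((d (n-i):ℚ):ℝ) * x ^ (n-i)) *
                  (((∑ m ∈ (Nat.divisors i).erase i, (m:ℚ) * t m : ℚ) : ℝ) * x ^ i)
                ≤ ∑ i ∈ Finset.Icc 2 n, K *
                  (((∑ m ∈ (Nat.divisors i).erase i, (m:ℚ) * t m : ℚ) : ℝ) * x ^ i) := by
                  apply Finset.sum_le_sum
                  intro i hi
                  rw [Finset.mem_Icc] at hi
                  exact mul_le_mul_of_nonneg_right (ih (n-i) (by omega)) (hgnn i)
            _ = K * ∑ i ∈ Finset.Icc 2 n, (((∑ m ∈ (Nat.divisors i).erase i, (m:ℚ) * t m : ℚ) : ℝ) * x ^ i) := by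
                  rw [Finset.mul_sum]
            _ ≤ K * S := mul_le_mul_of_nonneg_left (hpartial n) hK0.le
          have hnpos : (0:ℝ) < (n:ℝ) := by
            have : 0 < n := by omega
            exact_mod_cast this
          have hSn : K * S ≤ K * (n:ℝ) := by
            apply mul_le_mul_of_nonneg_left _ hK0.le
            calc S ≤ (n₀:ℝ) := hn₀S
            _ ≤ (n:ℝ) := by exact_mod_cast h
          have : (n:ℝ) * (((d n:ℚ):ℝ) * x ^ n) ≤ (n:ℝ) * K := by
            calc (n:ℝ) * (((d n:ℚ):ℝ) * x ^ n) ≤ K * S := hbound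
            _ ≤ K * (n:ℝ) := hSn
            _ = (n:ℝ) * K := by ring
          exact le_of_mul_le_mul_left this hnpos
    -- conclude summability by geometric comparison
    have hsx1 : s / x < 1 := (div_lt_one hx0).mpr hsx
    have hsx0 : 0 ≤ s / x := by positivity
    apply Summable.of_nonneg_of_le
        (fun n => mul_nonneg (abs_nonneg _) (pow_nonneg hs0 n))
        (fun n => ?_) ((summable_geometric_of_lt_one hsx0 hsx1).mul_left K)
    rw [abs_of_nonneg (hdnnR n)]
    have heq : ((d n:ℚ):ℝ) * s ^ n = (((d n:ℚ):ℝ) * x ^ n) * (s/x) ^ n := by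
      rw [div_pow]
      field_simp
    rw [heq]
    exact mul_le_mul_of_nonneg_right (hmain n) (by positivity)
  · -- divergence for s > √ρ
    intro s hs hcon
    have hs0 : 0 < s := lt_of_le_of_lt (Real.sqrt_nonneg ρ) hs
    have hρs : ρ < s^2 := (Real.sqrt_lt' hs0).mp hs
    have h1 : Summable fun m : ℕ => |((d (2*m) : ℚ) : ℝ)| * s ^ (2*m) :=
      hcon.comp_injective (fun a b hab => by simp only at hab; omega : Function.Injective fun m : ℕ => 2*m)
    have h2 : Summable fun m : ℕ => |((t m : ℚ) : ℝ)| * (s^2) ^ m := by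
      apply Summable.of_nonneg_of_le
          (fun m => mul_nonneg (abs_nonneg _) (by positivity))
          (fun m => ?_) (h1.mul_left 2)
      match m with
      | 0 =>
        simp only [ht0]
        norm_num
        <;> positivity
      | (k+1) =>
        rw [abs_of_nonneg (htnnR (k+1)), abs_of_nonneg (hdnnR (2*(k+1))), ← pow_mul]
        have hlow : ((t (k+1) : ℚ) : ℝ) ≤ 2 * ((d (2*(k+1)) : ℚ) : ℝ) := by
          have := hdl (k+1) (by omega)
          have h3 : ((t (k+1) / 2 : ℚ) : ℝ) ≤ ((d (2*(k+1)) : ℚ) : ℝ) := by exact_mod_cast this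
          push_cast at h3
          linarith
        calc ((t (k+1):ℚ):ℝ) * s ^ (2*(k+1))
            ≤ (2 * ((d (2*(k+1)):ℚ):ℝ)) * s ^ (2*(k+1)) :=
              mul_le_mul_of_nonneg_right hlow (by positivity)
        _ = 2 * (((d (2*(k+1)):ℚ):ℝ) * s ^ (2*(k+1))) := by ring
    exact hρ2 (s^2) hρs h2
end
end

section
/- Let t₂ : ℕ → ℚ be the sequence with t₂(1) = 1, t₂(n) = 0 for all even n and for n = 0, and, for odd n ≥ 3, t₂(n) = (1/2)·∑_{i=1}^{n−2} t₂(i)·t₂(n−1−i) + (1/2)·t₂((n−1)/2). Let τ be the radius of convergence of ∑_{n≥1} t₂(n)·z^n. Then 0 < τ < 1 and ∑' n, t₂(n)·τ^n = 1/τ (i.e. T₂(τ) = τ^{−1}, with convergence of the series at z = τ). -/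
open Filter Topology

section Helpers

open Finset

variable (t2 : ℕ → ℚ)
    (h1 : t2 1 = 1)
    (heven : ∀ n : ℕ, Even n → t2 n = 0)
    (h0 : t2 0 = 0)
    (hrec : ∀ n : ℕ, 3 ≤ n → Odd n →
      t2 n = (1 / 2) * (∑ i ∈ Finset.Icc 1 (n - 2), t2 i * t2 (n - 1 - i)) +
        (1 / 2) * t2 ((n - 1) / 2))

include h1 heven h0 hrec

lemma t2_nonneg : ∀ n, 0 ≤ t2 n := by
  intro n
  induction n using Nat.strong_induction_on with
  | _ n ih =>
    rcases Nat.even_or_odd n with he | ho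
    · rw [heven n he]
    · rcases Nat.lt_or_ge n 3 with hn | hn
      · interval_cases n
        · simp [h0]
        · simp [h1]
        · rw [heven 2 (by norm_num)]
      · rw [hrec n hn ho]
        have hs : 0 ≤ ∑ i ∈ Finset.Icc 1 (n - 2), t2 i * t2 (n - 1 - i) := by
          apply Finset.sum_nonneg
          intro i hi
          simp only [Finset.mem_Icc] at hi
          exact mul_nonneg (ih i (by omega)) (ih (n - 1 - i) (by omega))
        have hd : 0 ≤ t2 ((n - 1) / 2) := ih _ (by omega)
        positivity

lemma t2_le_catalan : ∀ n, t2 n ≤ (catalan n : ℚ) := by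
  intro n
  induction n using Nat.strong_induction_on with
  | _ n ih =>
    rcases Nat.even_or_odd n with he | ho
    · rw [heven n he]; positivity
    · rcases Nat.lt_or_ge n 3 with hn | hn
      · interval_cases n
        · simp [h0]
        · simp [h1]
        · rw [heven 2 (by norm_num)]; positivity
      · rw [hrec n hn ho]
        have hcat : ∀ m, (0:ℚ) ≤ (catalan m : ℚ) := fun m => by positivity
        have hsum : ∑ i ∈ Finset.Icc 1 (n - 2), t2 i * t2 (n - 1 - i)
            ≤ (catalan n : ℚ) := by
          have h1' : ∑ i ∈ Finset.Icc 1 (n - 2), t2 i * t2 (n - 1 - i)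
              ≤ ∑ i ∈ Finset.Icc 1 (n - 2), (catalan i : ℚ) * (catalan (n - 1 - i) : ℚ) := by
            apply Finset.sum_le_sum
            intro i hi
            simp only [Finset.mem_Icc] at hi
            exact mul_le_mul (ih i (by omega)) (ih (n - 1 - i) (by omega))
              (t2_nonneg t2 h1 heven h0 hrec _) (hcat _)
          have h2' : ∑ i ∈ Finset.Icc 1 (n - 2), (catalan i : ℚ) * (catalan (n - 1 - i) : ℚ)
              ≤ ∑ i ∈ Finset.range n, (catalan i : ℚ) * (catalan (n - 1 - i) : ℚ) := by
            apply Finset.sum_le_sum_of_subset_of_nonneg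
            · intro i hi
              simp only [Finset.mem_Icc] at hi
              simp only [Finset.mem_range]; omega
            · intro i _ _
              exact mul_nonneg (hcat _) (hcat _)
          have h3' : ∑ i ∈ Finset.range n, (catalan i : ℚ) * (catalan (n - 1 - i) : ℚ)
              = (catalan n : ℚ) := by
            obtain ⟨m, rfl⟩ : ∃ m, n = m + 1 := ⟨n - 1, by omega⟩
            rw [catalan_succ' m, Finset.Nat.sum_antidiagonal_eq_sum_range_succ_mk]
            push_cast
            simp
          linarith
        have hmono : (catalan ((n-1)/2) : ℚ) ≤ (catalan n : ℚ) := by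
          have : catalan ((n-1)/2) ≤ catalan n := by
            apply monotone_nat_of_le_succ (f := catalan) ?_ (by omega)
            intro k
            rw [catalan_succ' k, Finset.Nat.sum_antidiagonal_eq_sum_range_succ_mk]
            calc catalan k = catalan k * catalan (k - k) := by simp
            _ ≤ ∑ i ∈ range (k+1), catalan i * catalan (k - i) :=
              Finset.single_le_sum (f := fun i => catalan i * catalan (k - i))
                (fun i _ => Nat.zero_le _) (by simp)
          exact_mod_cast this
        have hd := (ih ((n-1)/2) (by omega)).trans hmono
        linarith

lemma t2_le_four_pow (n : ℕ) : (t2 n : ℝ) ≤ 4 ^ n := by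
  have h1' : t2 n ≤ (catalan n : ℚ) := t2_le_catalan t2 h1 heven h0 hrec n
  have h2' : catalan n ≤ 4 ^ n := by
    have ha : catalan n ≤ n.centralBinom := by
      calc catalan n ≤ (n+1) * catalan n := Nat.le_mul_of_pos_left _ (by omega)
      _ = n.centralBinom := succ_mul_catalan_eq_centralBinom n
    have hb : n.centralBinom ≤ 4 ^ n := by
      rw [Nat.centralBinom_eq_two_mul_choose]
      calc (2*n).choose n ≤ ∑ m ∈ range (2*n+1), (2*n).choose m :=
        Finset.single_le_sum (fun i _ => Nat.zero_le _) (by simp [Finset.mem_range]; omega)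
      _ = 2 ^ (2*n) := Nat.sum_range_choose (2*n)
      _ = 4 ^ n := by rw [pow_mul]; norm_num
    omega
  have hc : (t2 n : ℝ) ≤ ((catalan n : ℚ) : ℝ) := by exact_mod_cast h1'
  calc (t2 n : ℝ) ≤ ((catalan n : ℚ) : ℝ) := hc
  _ ≤ 4 ^ n := by
    have : ((catalan n : ℚ):ℝ) ≤ ((4^n : ℕ) : ℝ) := by exact_mod_cast h2'
    simpa using this


/-- The per-coefficient decomposition of `t2 n * x^n`. -/
lemma per_n (x : ℝ) (n : ℕ) :
    (t2 n : ℝ) * x ^ n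
      = (if n = 1 then x else 0)
        + (x/2) * (∑ p ∈ antidiagonal (n-1),
            ((t2 p.1 : ℝ) * x ^ p.1) * ((t2 p.2 : ℝ) * x ^ p.2))
        + (x/2) * (if n % 2 = 1 then (t2 ((n-1)/2) : ℝ) * (x^2)^((n-1)/2) else 0) := by
  rcases Nat.lt_or_ge n 3 with hn | hn
  · interval_cases n
    · simp [h0]
    · simp [h0, h1]
    · rw [heven 2 (by norm_num)]
      simp [Finset.Nat.antidiagonal_succ, h0]
  · rcases Nat.even_or_odd n with he | ho
    · -- n even ≥ 3
      have hne1 : n ≠ 1 := by omega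
      have hm0 : n % 2 = 0 := Nat.even_iff.mp he
      have hodd : Odd (n - 1) := Nat.Even.sub_odd (by omega) he odd_one
      have hconv : ∑ p ∈ antidiagonal (n-1),
          ((t2 p.1 : ℝ) * x ^ p.1) * ((t2 p.2 : ℝ) * x ^ p.2) = 0 := by
        apply Finset.sum_eq_zero
        intro p hp
        rw [Finset.HasAntidiagonal.mem_antidiagonal] at hp
        have hoddp : Odd (p.1 + p.2) := hp ▸ hodd
        rcases Nat.even_or_odd p.1 with h | h
        · rw [heven p.1 h]; simp
        · have h2 : Even p.2 := (Nat.odd_add.mp hoddp).mp h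
          rw [heven p.2 h2]; simp
      rw [heven n he, hconv, if_neg hne1, if_neg (by omega : ¬ n % 2 = 1)]
      simp
    · -- n odd ≥ 3
      obtain ⟨k, hk⟩ := ho
      have hmod : n % 2 = 1 := by omega
      have hne1 : n ≠ 1 := by omega
      have hdiv : (n-1)/2 = k := by omega
      have hsub : Finset.Icc 1 (n-2) ⊆ Finset.range n := by
        intro i hi
        simp only [Finset.mem_Icc] at hi
        simp only [Finset.mem_range]
        omega
      have hvan : ∀ i ∈ Finset.range n, i ∉ Finset.Icc 1 (n-2) →
          ((t2 i : ℝ) * x ^ i) * ((t2 (n-1-i) : ℝ) * x ^ (n-1-i)) = 0 := by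
        intro i hi hni
        simp only [Finset.mem_range] at hi
        simp only [Finset.mem_Icc] at hni
        have : i = 0 ∨ i = n - 1 := by omega
        rcases this with rfl | rfl
        · simp [h0]
        · have h' : n - 1 - (n-1) = 0 := by omega
          rw [h']
          simp [h0]
      have hconv : ∑ p ∈ antidiagonal (n-1),
          ((t2 p.1 : ℝ) * x ^ p.1) * ((t2 p.2 : ℝ) * x ^ p.2)
          = ∑ i ∈ Finset.Icc 1 (n-2), ((t2 i : ℝ) * (t2 (n-1-i) : ℝ)) * x^(n-1) := by
        rw [Finset.Nat.sum_antidiagonal_eq_sum_range_succ_mk]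
        have hr : (n-1).succ = n := by omega
        rw [hr, ← Finset.sum_subset hsub hvan]
        apply Finset.sum_congr rfl
        intro i hi
        simp only [Finset.mem_Icc] at hi
        have hxp : x^i * x^(n-1-i) = x^(n-1) := by rw [← pow_add]; congr 1; omega
        calc ((t2 i : ℝ) * x ^ i) * ((t2 (n-1-i) : ℝ) * x ^ (n-1-i))
            = ((t2 i : ℝ) * (t2 (n-1-i) : ℝ)) * (x^i * x^(n-1-i)) := by ring
        _ = _ := by rw [hxp]
      rw [hrec n hn ⟨k, hk⟩]
      push_cast
      rw [if_neg hne1, if_pos hmod, hdiv, hconv, ← Finset.sum_mul]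
      have hxn : x ^ n = x^(n-1) * x := by rw [← pow_succ]; congr 1; omega
      have hx2 : ((x^2)^k : ℝ) = x^(n-1) := by rw [← pow_mul]; congr 1; omega
      rw [hxn, hx2]
      ring


variable (hpos : ∀ n, 0 ≤ t2 n)
include hpos

/-- The functional equation, valid whenever the series converges at `x` and `x²`. -/
lemma tsum_eq_funeq (x : ℝ) (hx : 0 ≤ x)
    (hs1 : Summable fun n => (t2 n : ℝ) * x ^ n)
    (hs2 : Summable fun n => (t2 n : ℝ) * (x^2) ^ n) :
    ∑' n, (t2 n : ℝ) * x ^ n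
      = x + (x/2) * (∑' n, (t2 n : ℝ) * x ^ n)^2
        + (x/2) * (∑' n, (t2 n : ℝ) * (x^2) ^ n) := by
  have hBnn : ∀ n, 0 ≤ (t2 n : ℝ) * x ^ n := fun n =>
    mul_nonneg (by exact_mod_cast hpos n) (pow_nonneg hx n)
  have hnorm : Summable fun n => ‖(t2 n : ℝ) * x ^ n‖ :=
    hs1.congr fun n => (Real.norm_of_nonneg (hBnn n)).symm
  set conv : ℕ → ℝ :=
    fun m => ∑ p ∈ antidiagonal m, ((t2 p.1 : ℝ) * x ^ p.1) * ((t2 p.2 : ℝ) * x ^ p.2)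
    with hc
  have hconvnn : ∀ m, 0 ≤ conv m := fun m =>
    Finset.sum_nonneg fun p _ => mul_nonneg (hBnn _) (hBnn _)
  have hconv_sum : Summable conv :=
    (summable_norm_sum_mul_antidiagonal_of_summable_norm hnorm hnorm).congr
      fun m => Real.norm_of_nonneg (hconvnn m)
  have hcauchy : (∑' n, (t2 n : ℝ) * x ^ n) * (∑' n, (t2 n : ℝ) * x ^ n) = ∑' m, conv m :=
    tsum_mul_tsum_eq_tsum_sum_antidiagonal_of_summable_norm hnorm hnorm
  set d : ℕ → ℝ :=
    fun n => if n % 2 = 1 then (t2 ((n-1)/2) : ℝ) * (x^2)^((n-1)/2) else 0 with hd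
  have hdcomp : ∀ k, d (2*k+1) = (t2 k : ℝ) * (x^2)^k := by
    intro k
    have e1 : (2*k+1) % 2 = 1 := by omega
    have e2 : (2*k+1-1)/2 = k := by omega
    rw [hd]; simp only [e1, e2, if_pos]
  have hinj : Function.Injective (fun k : ℕ => 2*k+1) := fun a b h => by
    simp only at h; omega
  have hrange0 : ∀ m, m ∉ Set.range (fun k : ℕ => 2*k+1) → d m = 0 := by
    intro m hm
    rw [hd]; simp only
    rw [if_neg]
    intro hmod
    refine hm ⟨m/2, ?_⟩
    simp only
    omega
  have hd_sum : Summable d := by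
    rw [← hinj.summable_iff hrange0]
    exact hs2.congr fun k => (hdcomp k).symm
  have hd_tsum : ∑' n, d n = ∑' k, (t2 k : ℝ) * (x^2)^k := by
    rw [← hinj.tsum_eq (f := d) ?_]
    · exact tsum_congr hdcomp
    · intro m hm
      by_contra hmr
      exact hm (hrange0 m hmr)
  have hconv'_sum : Summable (fun n => conv (n-1)) := by
    apply (summable_nat_add_iff 1).mp
    exact hconv_sum.congr fun n => by simp
  have he_sum : Summable (fun n : ℕ => if n = 1 then x else 0) := by
    apply summable_of_ne_finset_zero (s := {1})
    intro n hn
    simp only [Finset.mem_singleton] at hn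
    rw [if_neg hn]
  have hdecomp : ∀ n, (t2 n : ℝ) * x ^ n
      = (if n = 1 then x else 0) + ((x/2) * conv (n-1)) + ((x/2) * d n) := by
    intro n
    have h := per_n t2 h1 heven h0 hrec x n
    rw [hc, hd]
    exact h
  have hshift : ∑' n, conv (n-1) = ∑' m, conv m := by
    rw [Summable.tsum_eq_zero_add hconv'_sum]
    have hconv0 : conv 0 = 0 := by
      rw [hc]
      simp [h0]
    have : (fun n : ℕ => conv (n + 1 - 1)) = conv := by
      funext n; simp
    rw [hconv0, zero_add]
    exact tsum_congr fun n => by simp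
  calc ∑' n, (t2 n : ℝ) * x ^ n
      = ∑' n, ((if n = 1 then x else 0) + ((x/2) * conv (n-1)) + ((x/2) * d n)) :=
        tsum_congr hdecomp
  _ = (∑' n, ((if n = 1 then x else 0) + ((x/2) * conv (n-1)))) + ∑' n, (x/2) * d n := by
        rw [Summable.tsum_add (he_sum.add (hconv'_sum.mul_left _)) (hd_sum.mul_left _)]
  _ = (∑' n, (if n = 1 then x else 0)) + (∑' n, (x/2) * conv (n-1)) + ∑' n, (x/2) * d n := by
        rw [Summable.tsum_add he_sum (hconv'_sum.mul_left _)]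
  _ = x + (x/2) * (∑' n, conv (n-1)) + (x/2) * (∑' n, d n) := by
        rw [tsum_ite_eq, tsum_mul_left, tsum_mul_left]
  _ = x + (x/2) * (∑' n, (t2 n : ℝ) * x ^ n)^2 + (x/2) * (∑' n, (t2 n : ℝ) * (x^2)^n) := by
        rw [hshift, ← hcauchy, hd_tsum, pow_two (∑' n, (t2 n : ℝ) * x ^ n)]


/-- Partial sums are bounded by any `w ≥ 0` satisfying the fixed-point inequality. -/
lemma partial_le (x w K : ℝ) (hx : 0 ≤ x) (hK0 : 0 ≤ K)
    (hK : ∀ N, ∑ k ∈ Finset.range N, (t2 k : ℝ) * (x^2)^k ≤ K)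
    (hw0 : 0 ≤ w) (hw : x + (x/2)*w^2 + (x/2)*K ≤ w) :
    ∀ N, ∑ n ∈ Finset.range N, (t2 n : ℝ) * x^n ≤ w := by
  have hBnn : ∀ n, 0 ≤ (t2 n : ℝ) * x ^ n := fun n =>
    mul_nonneg (by exact_mod_cast hpos n) (pow_nonneg hx n)
  set conv : ℕ → ℝ :=
    fun m => ∑ p ∈ antidiagonal m, ((t2 p.1 : ℝ) * x ^ p.1) * ((t2 p.2 : ℝ) * x ^ p.2)
    with hc
  have hconvnn : ∀ m, 0 ≤ conv m := fun m =>
    Finset.sum_nonneg fun p _ => mul_nonneg (hBnn _) (hBnn _)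
  set d : ℕ → ℝ :=
    fun n => if n % 2 = 1 then (t2 ((n-1)/2) : ℝ) * (x^2)^((n-1)/2) else 0 with hd
  have hdnn : ∀ n, 0 ≤ d n := by
    intro n
    rw [hd]
    dsimp only
    split
    · exact mul_nonneg (by exact_mod_cast hpos _) (pow_nonneg (sq_nonneg x) _)
    · exact le_refl 0
  intro N
  induction N with
  | zero => simpa using hw0
  | succ N ih =>
    have hdec : ∑ n ∈ Finset.range (N+1), (t2 n : ℝ) * x^n
        = (∑ n ∈ Finset.range (N+1), (if n = 1 then x else 0))
          + (x/2) * (∑ n ∈ Finset.range (N+1), conv (n-1))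
          + (x/2) * (∑ n ∈ Finset.range (N+1), d n) := by
      rw [Finset.mul_sum, Finset.mul_sum, ← Finset.sum_add_distrib, ← Finset.sum_add_distrib]
      exact Finset.sum_congr rfl fun n _ => per_n t2 h1 heven h0 hrec x n
    have hbound1 : (∑ n ∈ Finset.range (N+1), (if n = 1 then x else 0)) ≤ x := by
      rw [Finset.sum_ite_eq' (Finset.range (N+1)) 1 (fun _ => x)]
      split
      · exact le_refl x
      · exact hx
    have hbound2 : (∑ n ∈ Finset.range (N+1), conv (n-1)) ≤ w^2 := by
      have hshift : ∑ n ∈ Finset.range (N+1), conv (n-1)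
          = conv 0 + ∑ i ∈ Finset.range N, conv i := by
        rw [Finset.sum_range_succ']
        simp only [Nat.add_sub_cancel, Nat.zero_sub]
        ring
      have hconv0 : conv 0 = 0 := by
        rw [hc]; simp [h0]
      have hdisj : (↑(Finset.range N) : Set ℕ).PairwiseDisjoint antidiagonal := by
        intro a _ b _ hab
        apply Finset.disjoint_left.mpr
        intro p hpa hpb
        rw [Finset.HasAntidiagonal.mem_antidiagonal] at hpa hpb
        exact hab (hpa ▸ hpb)
      have hbi : ∑ i ∈ Finset.range N, conv i
          = ∑ p ∈ (Finset.range N).biUnion antidiagonal,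
              ((t2 p.1 : ℝ) * x ^ p.1) * ((t2 p.2 : ℝ) * x ^ p.2) :=
        (Finset.sum_biUnion hdisj).symm
      have hsub : (Finset.range N).biUnion antidiagonal ⊆ Finset.range N ×ˢ Finset.range N := by
        intro p hp
        rw [Finset.mem_biUnion] at hp
        obtain ⟨m, hm, hpm⟩ := hp
        rw [Finset.mem_range] at hm
        rw [Finset.HasAntidiagonal.mem_antidiagonal] at hpm
        rw [Finset.mem_product, Finset.mem_range, Finset.mem_range]
        omega
      have hsq : (∑ a ∈ Finset.range N, (t2 a : ℝ) * x ^ a)^2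
          = ∑ p ∈ Finset.range N ×ˢ Finset.range N,
              ((t2 p.1 : ℝ) * x ^ p.1) * ((t2 p.2 : ℝ) * x ^ p.2) := by
        rw [sq, Finset.sum_mul_sum, Finset.sum_product]
      have h2 : ∑ i ∈ Finset.range N, conv i
          ≤ (∑ a ∈ Finset.range N, (t2 a : ℝ) * x ^ a)^2 := by
        rw [hbi, hsq]
        apply Finset.sum_le_sum_of_subset_of_nonneg hsub
        intro p _ _
        exact mul_nonneg (hBnn _) (hBnn _)
      have h3 : (∑ a ∈ Finset.range N, (t2 a : ℝ) * x ^ a)^2 ≤ w^2 :=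
        pow_le_pow_left₀ (Finset.sum_nonneg fun n _ => hBnn n) ih 2
      calc ∑ n ∈ Finset.range (N+1), conv (n-1) = conv 0 + ∑ i ∈ Finset.range N, conv i := hshift
      _ = ∑ i ∈ Finset.range N, conv i := by rw [hconv0, zero_add]
      _ ≤ w^2 := le_trans h2 h3
    have hbound3 : (∑ n ∈ Finset.range (N+1), d n) ≤ K := by
      set I : Finset ℕ := (Finset.range (N+1)).image (fun k => 2*k+1) with hI
      have hstep1 : ∑ n ∈ Finset.range (N+1), d n
          = ∑ n ∈ Finset.range (N+1) ∩ I, d n := by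
        symm
        apply Finset.sum_subset Finset.inter_subset_left
        intro n hn hni
        rw [Finset.mem_range] at hn
        rcases eq_or_ne (n % 2) 1 with hm | hm
        · exfalso
          apply hni
          rw [Finset.mem_inter]
          refine ⟨Finset.mem_range.mpr hn, ?_⟩
          rw [hI, Finset.mem_image]
          exact ⟨n/2, Finset.mem_range.mpr (by omega), by omega⟩
        · rw [hd]; dsimp only; rw [if_neg hm]
      have hstep2 : ∑ n ∈ Finset.range (N+1) ∩ I, d n ≤ ∑ n ∈ I, d n :=
        Finset.sum_le_sum_of_subset_of_nonneg Finset.inter_subset_right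
          (fun n _ _ => hdnn n)
      have hstep3 : ∑ n ∈ I, d n = ∑ k ∈ Finset.range (N+1), d (2*k+1) := by
        rw [hI]
        apply Finset.sum_image
        intro a _ b _ hab
        simp only at hab
        omega
      have hstep4 : ∑ k ∈ Finset.range (N+1), d (2*k+1)
          = ∑ k ∈ Finset.range (N+1), (t2 k : ℝ) * (x^2)^k := by
        apply Finset.sum_congr rfl
        intro k _
        rw [hd]
        dsimp only
        rw [if_pos (by omega : (2*k+1) % 2 = 1)]
        have hk2 : (2*k+1-1)/2 = k := by omega
        rw [hk2]
      calc ∑ n ∈ Finset.range (N+1), d n = ∑ n ∈ Finset.range (N+1) ∩ I, d n := hstep1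
      _ ≤ ∑ n ∈ I, d n := hstep2
      _ = ∑ k ∈ Finset.range (N+1), (t2 k : ℝ) * (x^2)^k := by rw [hstep3, hstep4]
      _ ≤ K := hK (N+1)
    have hx2 : (0:ℝ) ≤ x/2 := by linarith
    calc ∑ n ∈ Finset.range (N+1), (t2 n : ℝ) * x^n
        = _ := hdec
    _ ≤ x + (x/2)*w^2 + (x/2)*K := by
        have := mul_le_mul_of_nonneg_left hbound2 hx2
        have := mul_le_mul_of_nonneg_left hbound3 hx2
        linarith
    _ ≤ w := hw


end Helpers

/-- for the counting sequence `t₂` of binary Pólya trees (every node has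
outdegree 0 or 2), the radius of convergence `τ` of `∑ t₂(n)·z^n` satisfies `0 < τ < 1`
and the series converges at `z = τ` with `∑' n, t₂(n)·τ^n = 1/τ` (i.e. `T₂(τ) = τ⁻¹`). -/
theorem binary_polya_radius_and_value
    (t2 : ℕ → ℚ)
    (h1 : t2 1 = 1)
    (heven : ∀ n : ℕ, Even n → t2 n = 0)
    (h0 : t2 0 = 0)
    (hrec : ∀ n : ℕ, 3 ≤ n → Odd n →
      t2 n = (1 / 2) * (∑ i ∈ Finset.Icc 1 (n - 2), t2 i * t2 (n - 1 - i)) +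
        (1 / 2) * t2 ((n - 1) / 2))
    (τ : ℝ) (hτ : IsRadiusOfConv (fun n => (t2 n : ℝ)) τ) :
    0 < τ ∧ τ < 1 ∧
      Summable (fun n : ℕ => (t2 n : ℝ) * τ ^ n) ∧
      ∑' n : ℕ, (t2 n : ℝ) * τ ^ n = 1 / τ := by
  obtain ⟨hconv, hdiv⟩ := hτ
  have hpos : ∀ n, 0 ≤ t2 n := t2_nonneg t2 h1 heven h0 hrec
  have hposR : ∀ n, 0 ≤ (t2 n : ℝ) := fun n => by exact_mod_cast hpos n
  have hsve : ∀ s : ℝ, (fun n => |(fun n => (t2 n : ℝ)) n| * s^n) = fun n => (t2 n : ℝ) * s^n :=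
    fun s => funext fun n => by simp only [abs_of_nonneg (hposR n)]
  have hτ8 : (1/8 : ℝ) ≤ τ := by
    by_contra hlt
    push_neg at hlt
    apply hdiv (1/8) hlt
    rw [hsve]
    have hgeo : Summable fun n : ℕ => (1/2 : ℝ)^n :=
      summable_geometric_of_lt_one (by norm_num) (by norm_num)
    apply Summable.of_nonneg_of_le
      (fun n => mul_nonneg (hposR n) (by positivity)) (fun n => ?_) hgeo
    calc (t2 n : ℝ) * (1/8 : ℝ)^n ≤ 4^n * (1/8)^n := by
          apply mul_le_mul_of_nonneg_right (t2_le_four_pow t2 h1 heven h0 hrec n) (by positivity)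
    _ = (1/2 : ℝ)^n := by rw [← mul_pow]; norm_num
  have hτpos : 0 < τ := lt_of_lt_of_le (by norm_num) hτ8
  have hτne : τ ≠ 0 := ne_of_gt hτpos
  have hsum : ∀ s : ℝ, 0 ≤ s → s < τ → Summable fun n => (t2 n : ℝ) * s^n := by
    intro s hs0 hs
    rw [← hsve]
    exact hconv s hs0 hs
  -- τ < 1
  have hτ1 : τ < 1 := by
    by_contra hge
    push_neg at hge
    have h08 : (0.8 : ℝ) < τ := by linarith
    have hs1 := hsum 0.8 (by norm_num) h08
    have hs2 : Summable fun n => (t2 n : ℝ) * ((0.8 : ℝ)^2)^n :=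
      hsum ((0.8 : ℝ)^2) (by norm_num) (by nlinarith)
    have hid := tsum_eq_funeq t2 h1 heven h0 hrec hpos 0.8 (by norm_num) hs1 hs2
    set S := ∑' n, (t2 n : ℝ) * (0.8 : ℝ)^n with hS
    set T := ∑' n, (t2 n : ℝ) * ((0.8 : ℝ)^2)^n with hT
    have hT0 : 0 ≤ T := tsum_nonneg fun n => mul_nonneg (hposR n) (by positivity)
    nlinarith [sq_nonneg (S - 1.25)]
  have hττ : τ^2 < τ := by nlinarith
  have hMs : Summable fun n => (t2 n : ℝ) * (τ^2)^n := hsum (τ^2) (sq_nonneg τ) hττ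
  set M := ∑' n, (t2 n : ℝ) * (τ^2)^n with hMdef
  have hM0 : 0 ≤ M := tsum_nonneg fun n => mul_nonneg (hposR n) (pow_nonneg (sq_nonneg τ) n)
  have hub : ∀ s : ℝ, 0 ≤ s → s < τ →
      2*s^2 + s^2 * (∑' n, (t2 n : ℝ) * (s^2)^n) ≤ 1 := by
    intro s hs0 hs
    have hs1' := hsum s hs0 hs
    have hss : s^2 < τ := by nlinarith
    have hs2' : Summable fun n => (t2 n : ℝ) * (s^2)^n := hsum (s^2) (sq_nonneg s) hss
    have hid := tsum_eq_funeq t2 h1 heven h0 hrec hpos s hs0 hs1' hs2'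
    set f := ∑' n, (t2 n : ℝ) * s^n with hf
    set g := ∑' n, (t2 n : ℝ) * (s^2)^n with hg
    nlinarith [sq_nonneg (1 - s*f)]
  have hpartial : ∀ N, 2*τ^2 + τ^2 * (∑ k ∈ Finset.range N, (t2 k : ℝ) * (τ^2)^k) ≤ 1 := by
    intro N
    set p : ℝ → ℝ := fun s => 2*s^2 + s^2 * (∑ k ∈ Finset.range N, (t2 k : ℝ) * (s^2)^k) with hp
    have hpc : Continuous p := by
      apply Continuous.add (by fun_prop)
      apply Continuous.mul (by fun_prop)
      apply continuous_finset_sum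
      intro k _
      fun_prop
    have hev : ∀ᶠ s in 𝓝[<] τ, p s ≤ 1 := by
      filter_upwards [Ioo_mem_nhdsLT_of_mem
        (show τ ∈ Set.Ioc (0:ℝ) τ from ⟨hτpos, le_refl τ⟩)] with s hs
      obtain ⟨hs0, hsτ⟩ := hs
      have hss : s^2 < τ := by nlinarith
      have hsums2 : Summable fun k => (t2 k : ℝ) * (s^2)^k := hsum (s^2) (sq_nonneg s) hss
      have hle : ∑ k ∈ Finset.range N, (t2 k : ℝ) * (s^2)^k
          ≤ ∑' k, (t2 k : ℝ) * (s^2)^k :=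
        Summable.sum_le_tsum _ (fun k _ => mul_nonneg (hposR k) (by positivity)) hsums2
      have h2 := hub s hs0.le hsτ
      have hsq : (0:ℝ) ≤ s^2 := sq_nonneg s
      rw [hp]
      dsimp only
      nlinarith
    have htd : Filter.Tendsto p (𝓝[<] τ) (𝓝 (p τ)) :=
      (hpc.tendsto τ).mono_left nhdsWithin_le_nhds
    have := le_of_tendsto htd hev
    rw [hp] at this
    exact this
  have hDge : 2*τ^2 + τ^2 * M ≤ 1 := by
    have hM1 : M ≤ (1 - 2*τ^2)/τ^2 := by
      apply Summable.tsum_le_of_sum_range_le hMs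
      intro N
      have := hpartial N
      rw [le_div_iff₀ (by positivity)]
      linarith
    rw [le_div_iff₀ (by positivity)] at hM1
    linarith
  have hDle : 1 ≤ 2*τ^2 + τ^2 * M := by
    by_contra hD
    push_neg at hD
    set c : ℝ := (τ^2 + τ)/2 with hcdef
    have hc1 : τ^2 < c := by nlinarith
    have hc2 : c < τ := by nlinarith
    have hc0 : 0 ≤ c := by nlinarith [sq_nonneg τ]
    set F : ℝ → ℝ := fun y => ∑' n, (t2 n : ℝ) * (max 0 (min y c))^n with hF
    have hFc : Continuous F := by
      apply continuous_tsum ?_ (hsum c hc0 hc2) ?_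
      · intro n
        fun_prop
      · intro n y
        rw [Real.norm_of_nonneg (mul_nonneg (hposR n) (pow_nonneg (le_max_left 0 _) n))]
        apply mul_le_mul_of_nonneg_left ?_ (hposR n)
        apply pow_le_pow_left₀ (le_max_left 0 _)
        exact max_le hc0 (min_le_right y c)
    have hFeq : ∀ y, 0 ≤ y → y ≤ c → F y = ∑' n, (t2 n : ℝ) * y^n := by
      intro y hy0 hyc
      rw [hF]
      dsimp only
      rw [min_eq_left hyc, max_eq_right hy0]
    set G : ℝ → ℝ := fun s => 1 - 2*s^2 - s^2 * F (s^2) with hG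
    have hGc : Continuous G := by fun_prop
    have hGτ : 0 < G τ := by
      rw [hG]
      dsimp only
      rw [hFeq (τ^2) (sq_nonneg τ) hc1.le, ← hMdef]
      linarith
    have hopen : IsOpen {s : ℝ | 0 < G s ∧ s^2 < c} := by
      apply IsOpen.inter (isOpen_lt continuous_const hGc)
      exact isOpen_lt (continuous_pow 2) continuous_const
    have hmem : {s : ℝ | 0 < G s ∧ s^2 < c} ∈ 𝓝[>] τ :=
      nhdsWithin_le_nhds (hopen.mem_nhds ⟨hGτ, hc1⟩)
    obtain ⟨τ', hτ'mem, hττ'⟩ := ((Filter.eventually_iff.mpr hmem).and self_mem_nhdsWithin).exists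
    obtain ⟨hGτ', hτ'c⟩ := hτ'mem
    have hτ'pos : 0 < τ' := lt_trans hτpos hττ'
    have hsK : Summable fun n => (t2 n : ℝ) * (τ'^2)^n :=
      hsum (τ'^2) (sq_nonneg _) (lt_trans hτ'c hc2)
    set K := ∑' n, (t2 n : ℝ) * (τ'^2)^n with hKdef
    have hK0 : 0 ≤ K := tsum_nonneg fun n => mul_nonneg (hposR n) (by positivity)
    have hFK : F (τ'^2) = K := hFeq _ (sq_nonneg _) hτ'c.le
    have hΔval : G τ' = 1 - 2*τ'^2 - τ'^2*K := by
      rw [hG]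
      dsimp only
      rw [hFK]
    set Δ : ℝ := 1 - 2*τ'^2 - τ'^2*K with hΔdef
    have hΔpos : 0 < Δ := by rw [← hΔval]; exact hGτ'
    have hΔle1 : Δ ≤ 1 := by nlinarith [sq_nonneg τ']
    set u := Real.sqrt Δ with hu
    have hu0 : 0 < u := Real.sqrt_pos.mpr hΔpos
    have hu1 : u ≤ 1 := by
      rw [hu, show (1:ℝ) = Real.sqrt 1 from (Real.sqrt_one).symm]
      exact Real.sqrt_le_sqrt hΔle1
    have husq : u^2 = 1 - 2*τ'^2 - τ'^2*K := by
      rw [hu, Real.sq_sqrt hΔpos.le, hΔdef]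
    set w := (1 - u)/τ' with hwdef
    have hw0 : 0 ≤ w := div_nonneg (by linarith) hτ'pos.le
    have hτ'w : τ' * w = 1 - u := by
      rw [hwdef]
      field_simp
    have hτ'w2 : τ'^2 * w^2 = (1-u)^2 := by
      rw [← mul_pow, hτ'w]
    have hweq : τ' + (τ'/2)*w^2 + (τ'/2)*K ≤ w := by
      have key : 2*τ'*(τ' + (τ'/2)*w^2 + (τ'/2)*K) = 2*τ'*w := by
        have e1 : 2*τ'*w = 2*(1-u) := by linear_combination 2*hτ'w
        rw [e1]
        linear_combination hτ'w2 + husq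
      exact le_of_eq (mul_left_cancel₀ (ne_of_gt (by positivity : (0:ℝ) < 2*τ')) key)
    have hKr : ∀ N, ∑ k ∈ Finset.range N, (t2 k : ℝ) * (τ'^2)^k ≤ K := fun N =>
      Summable.sum_le_tsum _ (fun k _ => mul_nonneg (hposR k) (by positivity)) hsK
    have hple := partial_le t2 h1 heven h0 hrec hpos τ' w K hτ'pos.le hK0 hKr hw0 hweq
    have hsτ' : Summable fun n => (t2 n : ℝ) * τ'^n :=
      summable_of_sum_range_le (fun n => mul_nonneg (hposR n) (pow_nonneg hτ'pos.le n)) hple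
    apply hdiv τ' hττ'
    rw [hsve]
    exact hsτ'
  have hDeq : 2*τ^2 + τ^2 * M = 1 := le_antisymm hDge hDle
  have hKr : ∀ N, ∑ k ∈ Finset.range N, (t2 k : ℝ) * (τ^2)^k ≤ M := fun N =>
    Summable.sum_le_tsum _ (fun k _ => mul_nonneg (hposR k) (by positivity)) hMs
  have hwτ : τ + (τ/2)*(1/τ)^2 + (τ/2)*M ≤ 1/τ := by
    have h3 : τ^2 * (1/τ)^2 = 1 := by
      rw [← mul_pow]
      field_simp
    have key : (τ + (τ/2)*(1/τ)^2 + (τ/2)*M) * (2*τ) = (1/τ) * (2*τ) := by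
      calc (τ + (τ/2)*(1/τ)^2 + (τ/2)*M) * (2*τ)
          = 2*τ^2 + τ^2*(1/τ)^2 + τ^2*M := by ring
      _ = 2*τ^2 + 1 + τ^2*M := by rw [h3]
      _ = 2 := by linarith [hDeq]
      _ = (1/τ) * (2*τ) := by field_simp
    exact le_of_eq (mul_right_cancel₀ (ne_of_gt (by positivity : (0:ℝ) < 2*τ)) key)
  have hple := partial_le t2 h1 heven h0 hrec hpos τ (1/τ) M hτpos.le hM0 hKr (by positivity) hwτ
  have hsτ : Summable fun n => (t2 n : ℝ) * τ^n :=
    summable_of_sum_range_le (fun n => mul_nonneg (hposR n) (pow_nonneg hτpos.le n)) hple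
  have hid := tsum_eq_funeq t2 h1 heven h0 hrec hpos τ hτpos.le hsτ hMs
  rw [← hMdef] at hid
  set L := ∑' n, (t2 n : ℝ) * τ^n with hL
  have hLτ : (τ*L - 1)^2 = 0 := by linear_combination (-2*τ)*hid - hDeq
  have hτL : τ*L = 1 := by nlinarith [sq_nonneg (τ*L - 1)]
  refine ⟨hτpos, hτ1, hsτ, ?_⟩
  rw [eq_div_iff hτne]
  linarith [hτL]
end
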